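/- arXiv:2402.00513 — 5 statements merged into one kernel-verified Lean document; each statement's English description precedes it below -/
import Mathlib

section
/- Let X be a compact metric space with generalised dyadic cubes Q and net content N^f. Let A ⊆ X be Borel and f a dimension function. If there is c > 0 such that N^f(A ∩ Q) > c·N^f(Q) for every generalised cube Q ∈ Q, then in fact N^f(A ∩ Q) = N^f(Q) for every Q ∈ Q. -/
open Metric Set ENNReal Filter MeasureTheory

/-- A dimension function: continuous, nondecreasing, vanishing at 0, positive on positives. -/
structure DimFunc (f : ℝ → ℝ) : Prop where
  continuous : Continuous f
  mono : Monotone f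
  map_zero : f 0 = 0
  pos : ∀ r : ℝ, 0 < r → 0 < f r

/-- `f` is doubling with constant `D`. -/
def DoublingWith (f : ℝ → ℝ) (D : ℝ) : Prop :=
  ∀ r : ℝ, 0 < r → f (2 * r) < D * f r

/-- `f ⪯ g`: the ratio `f/g` is monotonic on `(0,∞)` and has a positive
(possibly infinite) limit as `r → 0⁺`. -/
def DimLE (f g : ℝ → ℝ) : Prop :=
  (MonotoneOn (fun r => f r / g r) (Ioi (0:ℝ)) ∨
    AntitoneOn (fun r => f r / g r) (Ioi (0:ℝ))) ∧
  ∃ L : ℝ≥0∞, 0 < L ∧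
    Tendsto (fun r => ENNReal.ofReal (f r / g r)) (nhdsWithin 0 (Ioi (0:ℝ))) (nhds L)

/-- A countable family consisting of (open) balls. -/
def IsBallFamily {X : Type*} [MetricSpace X] (U : ℕ → Set X) : Prop :=
  ∀ i, ∃ x : X, ∃ r : ℝ, U i = ball x r

/-- Hausdorff `f`-content: infimum of `∑ f(diam Bᵢ)` over countable covers by balls. -/
noncomputable def hCont {X : Type*} [MetricSpace X] (f : ℝ → ℝ) (A : Set X) : ℝ≥0∞ :=
  ⨅ (U : ℕ → Set X) (_ : IsBallFamily U) (_ : A ⊆ ⋃ i, U i),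
    ∑' i, ENNReal.ofReal (f (diam (U i)))

/-- Hausdorff `f`-premeasure at mesh `η`. -/
noncomputable def hMeasAux {X : Type*} [MetricSpace X] (f : ℝ → ℝ) (η : ℝ) (A : Set X) : ℝ≥0∞ :=
  ⨅ (U : ℕ → Set X) (_ : IsBallFamily U) (_ : A ⊆ ⋃ i, U i)
    (_ : ∀ i, diam (U i) ≤ η),
    ∑' i, ENNReal.ofReal (f (diam (U i)))

/-- Hausdorff `f`-measure: limit of the premeasures as the mesh tends to `0`. -/
noncomputable def hMeas {X : Type*} [MetricSpace X] (f : ℝ → ℝ) (A : Set X) : ℝ≥0∞ :=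
  ⨆ (η : ℝ) (_ : 0 < η), hMeasAux f η A

/-- The Hausdorff `g`-measure is `g`-Ahlfors regular with explicit constants `c₁, c₂`. -/
def AhlforsWith (g : ℝ → ℝ) (c₁ c₂ : ℝ) (Y : Type*) [MetricSpace Y] : Prop :=
  ∀ x : Y, ∀ r : ℝ, 0 < r →
    ENNReal.ofReal (c₁ * g r) ≤ hMeas g (ball x r) ∧
    hMeas g (ball x r) ≤ ENNReal.ofReal (c₂ * g r)

/-- The space `Y` supports a `g`-Ahlfors regular Hausdorff measure `H^g`. -/
def Ahlfors (g : ℝ → ℝ) (Y : Type*) [MetricSpace Y] : Prop :=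
  ∃ c₁ c₂ : ℝ, 0 < c₁ ∧ 0 < c₂ ∧ AhlforsWith g c₁ c₂ Y

/-- The class `G^f(X)`: `G_δ` sets whose intersection with every ball has
Hausdorff `f`-content uniformly comparable to that of the ball. -/
def MemG {X : Type*} [MetricSpace X] (f : ℝ → ℝ) (A : Set X) : Prop :=
  IsGδ A ∧ ∃ c : ℝ, 0 < c ∧ ∀ (x : X) (r : ℝ), 0 < r →
    ENNReal.ofReal c * hCont f (ball x r) < hCont f (A ∩ ball x r)

/-- The limsup set of a sequence of sets. -/
def limsupSet {X : Type*} (E : ℕ → Set X) : Set X := ⋂ N, ⋃ n, ⋃ (_ : N ≤ n), E n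

/-- A system of generalised dyadic cubes (Käenmäki–Rajala–Suomala with `r = 1/4`). -/
structure CubeSystem (Y : Type*) [MetricSpace Y] where
  cubes : ℤ → Set (Set Y)
  cover : ∀ n : ℤ, ⋃₀ cubes n = univ
  pdisj : ∀ n : ℤ, (cubes n).PairwiseDisjoint id
  nested : ∀ ⦃n k : ℤ⦄, k ≤ n → ∀ q ∈ cubes n, ∀ p ∈ cubes k, q ⊆ p ∨ Disjoint q p
  comparable : ∀ n : ℤ, ∀ q ∈ cubes n, ∃ x : Y,
    ball x ((4:ℝ) ^ (-n - 2)) ⊆ q ∧ q ⊆ ball x ((4:ℝ) ^ (-n + 1))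

/-- `q` is a generalised cube of the system `C`. -/
def CubeSystem.IsCube {Y : Type*} [MetricSpace Y] (C : CubeSystem Y) (q : Set Y) : Prop :=
  ∃ n : ℤ, q ∈ C.cubes n

/-- Net `f`-content: infimum of `∑ f(diam Qᵢ)` over countable covers by generalised cubes. -/
noncomputable def netCont {Y : Type*} [MetricSpace Y] (C : CubeSystem Y)
    (f : ℝ → ℝ) (A : Set Y) : ℝ≥0∞ :=
  ⨅ (U : ℕ → Set Y) (_ : ∀ i, C.IsCube (U i)) (_ : A ⊆ ⋃ i, U i),
    ∑' i, ENNReal.ofReal (f (diam (U i)))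

/-- Weighted Hausdorff `f`-premeasure at mesh `η`: infimum of `∑ cᵢ f(|Aᵢ|)` over
weighted covers `χ_A ≤ ∑ cᵢ χ_{Aᵢ}` with `|Aᵢ| ≤ η`. -/
noncomputable def wCont {X : Type*} [MetricSpace X] (f : ℝ → ℝ) (η : ℝ≥0∞) (A : Set X) : ℝ≥0∞ :=
  ⨅ (S : ℕ → Set X) (c : ℕ → ℝ≥0∞)
    (_ : ∀ i, 0 < c i ∧ c i < ⊤)
    (_ : ∀ i, EMetric.diam (S i) ≤ η)
    (_ : ∀ x ∈ A, 1 ≤ ∑' i, (S i).indicator (fun _ => c i) x),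
    ∑' i, c i * ENNReal.ofReal (f (diam (S i)))

/-- Weighted Hausdorff `f`-measure: limit of the weighted premeasures as mesh `→ 0`. -/
noncomputable def wMeas {X : Type*} [MetricSpace X] (f : ℝ → ℝ) (A : Set X) : ℝ≥0∞ :=
  ⨆ (η : ℝ≥0∞) (_ : 0 < η), wCont f η A

/-- The singular value function `φ^f(A)`. -/
noncomputable def svf {X : Type*} [MetricSpace X] [MeasurableSpace X]
    (f : ℝ → ℝ) (A : Set X) : ℝ≥0∞ :=
  ⨆ (μ : Measure X) (_ : IsProbabilityMeasure μ) (_ : μ Aᶜ = 0),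
    ⨅ (x ∈ A) (r : ℝ) (_ : 0 < r), ENNReal.ofReal (f r) / μ (ball x r)

section Stmt6Aux

variable {X : Type*} [MetricSpace X] (C : CubeSystem X)

lemma cube_nonempty' {q : Set X} {n : ℤ} (hq : q ∈ C.cubes n) : q.Nonempty := by
  obtain ⟨x, h1, _⟩ := C.comparable n q hq
  exact ⟨x, h1 (mem_ball_self (by positivity))⟩

lemma cube_nonempty {q : Set X} (hq : C.IsCube q) : q.Nonempty := by
  obtain ⟨n, hn⟩ := hq; exact cube_nonempty' C hn

lemma cube_isBounded {q : Set X} {n : ℤ} (hq : q ∈ C.cubes n) : Bornology.IsBounded q := by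
  obtain ⟨x, _, h2⟩ := C.comparable n q hq
  exact (isBounded_ball).subset h2

lemma cube_diam {q : Set X} {n : ℤ} (hq : q ∈ C.cubes n) : diam q ≤ 2 * (4:ℝ) ^ (-n + 1) := by
  obtain ⟨x, _, h2⟩ := C.comparable n q hq
  exact (diam_mono h2 isBounded_ball).trans (diam_ball (by positivity))

/-- Any two cubes are nested or disjoint. -/
lemma cube_trichotomy {q p : Set X} {n m : ℤ} (hq : q ∈ C.cubes n) (hp : p ∈ C.cubes m) :
    q ⊆ p ∨ p ⊆ q ∨ Disjoint q p := by
  rcases le_total m n with h | h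
  · rcases C.nested h q hq p hp with h' | h'
    · exact Or.inl h'
    · exact Or.inr (Or.inr h')
  · rcases C.nested h p hp q hq with h' | h'
    · exact Or.inr (Or.inl h')
    · exact Or.inr (Or.inr h'.symm)

lemma cube_subset_of_inter {q p : Set X} {n m : ℤ} (hq : q ∈ C.cubes n) (hp : p ∈ C.cubes m)
    (hmeet : (q ∩ p).Nonempty) : q ⊆ p ∨ p ⊆ q := by
  rcases cube_trichotomy C hq hp with h | h | h
  · exact Or.inl h
  · exact Or.inr h
  · exact absurd h (Set.not_disjoint_iff_nonempty_inter.mpr hmeet)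

lemma cube_level_lt {q p : Set X} {n m : ℤ} (hq : q ∈ C.cubes n) (hp : p ∈ C.cubes m)
    (hss : q ⊂ p) : m < n := by
  by_contra hle
  push_neg at hle
  rcases C.nested hle p hp q hq with h' | h'
  · exact hss.not_subset h'
  · obtain ⟨x, hx⟩ := cube_nonempty' C hq
    exact (h'.le_bot ⟨hss.subset hx, hx⟩ : x ∈ (⊥ : Set X))

lemma cube_eq_univ [CompactSpace X] {q : Set X} {n : ℤ}
    (hq : q ∈ C.cubes n) (hbig : diam (univ : Set X) < (4:ℝ) ^ (-n - 2)) : q = univ := by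
  obtain ⟨x, h1, _⟩ := C.comparable n q hq
  refine eq_univ_of_univ_subset (subset_trans ?_ h1)
  intro y _
  exact lt_of_le_of_lt (dist_le_diam_of_mem isCompact_univ.isBounded (mem_univ y) (mem_univ x)) hbig

variable (f : ℝ → ℝ)

open Classical in
noncomputable def nmf : Set X → ℝ≥0∞ := fun s =>
  if s = ∅ then 0 else if C.IsCube s then ENNReal.ofReal (f (diam s)) else ⊤

lemma nmf_empty : nmf C f ∅ = 0 := if_pos rfl

noncomputable def nuf : OuterMeasure X := OuterMeasure.ofFunction (nmf C f) (nmf_empty C f)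

lemma nmf_cube {q : Set X} (hq : C.IsCube q) : nmf C f q = ENNReal.ofReal (f (diam q)) := by
  rw [nmf, if_neg (Set.nonempty_iff_ne_empty.mp (cube_nonempty C hq)), if_pos hq]

lemma nuf_le_cube {q : Set X} (hq : C.IsCube q) : nuf C f q ≤ ENNReal.ofReal (f (diam q)) :=
  (OuterMeasure.ofFunction_le q).trans_eq (nmf_cube C f hq)

/-- small cubes exist -/
lemma exists_small_cube [Nonempty X] (hf : DimFunc f) {ε : ℝ≥0∞} (hε : 0 < ε) :
    ∃ q : Set X, C.IsCube q ∧ ENNReal.ofReal (f (diam q)) < ε := by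
  classical
  obtain ⟨x⟩ := ‹Nonempty X›
  have h4 : Tendsto (fun t : ℕ => 2 * (4:ℝ) ^ (-(t:ℤ) + 1)) atTop (nhds 0) := by
    have : (fun t : ℕ => 2 * (4:ℝ) ^ (-(t:ℤ) + 1)) = fun t : ℕ => 8 * (4⁻¹:ℝ) ^ t := by
      funext t
      rw [show (-(t:ℤ) + 1) = 1 + -(t:ℤ) by ring, zpow_add₀ (by norm_num : (4:ℝ) ≠ 0),
        zpow_neg, zpow_natCast, zpow_one, inv_pow]
      ring
    rw [this]
    simpa using (tendsto_pow_atTop_nhds_zero_of_lt_one (by norm_num : (0:ℝ) ≤ 4⁻¹)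
      (by norm_num : (4⁻¹:ℝ) < 1)).const_mul (8:ℝ)
  have hlim : Tendsto (fun t : ℕ => ENNReal.ofReal (f (2 * (4:ℝ) ^ (-(t:ℤ) + 1)))) atTop (nhds 0) := by
    have := (ENNReal.continuous_ofReal.tendsto _).comp ((hf.continuous.tendsto _).comp h4)
    simpa [hf.map_zero, Function.comp_def] using this
  obtain ⟨t, ht⟩ := (hlim.eventually (gt_mem_nhds hε)).exists
  have hx : x ∈ ⋃₀ C.cubes (t:ℤ) := by rw [C.cover]; trivial
  obtain ⟨q, hq, hxq⟩ := hx
  refine ⟨q, ⟨t, hq⟩, lt_of_le_of_lt ?_ ht⟩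
  exact ENNReal.ofReal_le_ofReal (hf.mono (cube_diam C hq))

/-- netCont equals the outer measure `nu`. -/
lemma netCont_eq_nuf [Nonempty X] (hf : DimFunc f) (A : Set X) :
    netCont C f A = nuf C f A := by
  classical
  refine le_antisymm ?_ ?_
  · rw [nuf, OuterMeasure.ofFunction_apply]
    refine le_iInf fun t => le_iInf fun hcov => ?_
    by_cases hall : ∀ i, t i = ∅ ∨ C.IsCube (t i)
    · -- padding argument
      have hval : ∀ i, nmf C f (t i) = ENNReal.ofReal (f (diam (t i))) := by
        intro i
        rcases hall i with h | h
        · rw [h, nmf_empty, diam_empty, hf.map_zero, ENNReal.ofReal_zero]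
        · exact nmf_cube C f h
      refine ENNReal.le_of_forall_pos_le_add fun ε hε _ => ?_
      have hpos : ∀ i : ℕ, (0:ℝ≥0∞) < (ε:ℝ≥0∞) * 2⁻¹ ^ (i+1) := by
        intro i
        exact ENNReal.mul_pos (by exact_mod_cast hε.ne') (pow_ne_zero _ (by norm_num))
      have hchoice : ∀ i : ℕ, ∃ q : Set X, C.IsCube q ∧
          ENNReal.ofReal (f (diam q)) < (ε:ℝ≥0∞) * 2⁻¹ ^ (i+1) :=
        fun i => exists_small_cube C f hf (hpos i)
      choose pad hpad1 hpad2 using hchoice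
      set V : ℕ → Set X := fun i => if t i = ∅ then pad i else t i with hV
      have hVcube : ∀ i, C.IsCube (V i) := by
        intro i; rw [hV]; dsimp only; split_ifs with h
        · exact hpad1 i
        · rcases hall i with h' | h'; · exact absurd h' h
          · exact h'
      have hVcov : A ⊆ ⋃ i, V i := by
        refine hcov.trans (Set.iUnion_mono fun i => ?_)
        rw [hV]; dsimp only; split_ifs with h
        · rw [h]; exact Set.empty_subset _
        · exact subset_rfl
      have hle : netCont C f A ≤ ∑' i, ENNReal.ofReal (f (diam (V i))) := by
        refine iInf_le_of_le V (iInf_le_of_le hVcube (iInf_le _ hVcov))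
      refine hle.trans ?_
      have hterm : ∀ i, ENNReal.ofReal (f (diam (V i))) ≤
          nmf C f (t i) + (ε:ℝ≥0∞) * 2⁻¹ ^ (i+1) := by
        intro i
        rw [hval i, hV]; dsimp only; split_ifs with h
        · exact le_add_left (hpad2 i).le
        · exact le_add_right le_rfl
      refine (ENNReal.tsum_le_tsum hterm).trans ?_
      rw [ENNReal.tsum_add, ENNReal.tsum_mul_left]
      have hgeo : ∑' i : ℕ, (2⁻¹:ℝ≥0∞) ^ (i+1) = 1 := by
        simp only [pow_succ']
        rw [ENNReal.tsum_mul_left, ENNReal.tsum_geometric]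
        rw [ENNReal.one_sub_inv_two, inv_inv]
        exact ENNReal.inv_mul_cancel (by norm_num) (by norm_num)
      rw [hgeo, mul_one]
    · push_neg at hall
      obtain ⟨i, hne, hnc⟩ := hall
      have htop : nmf C f (t i) = ⊤ := by
        rw [nmf, if_neg (Set.nonempty_iff_ne_empty.mp hne), if_neg hnc]
      exact le_top.trans_eq (ENNReal.tsum_eq_top_of_eq_top ⟨i, htop⟩).symm
  · refine le_iInf fun U => le_iInf fun hUcube => le_iInf fun hUcov => ?_
    rw [nuf, OuterMeasure.ofFunction_apply]
    refine iInf_le_of_le U (iInf_le_of_le hUcov ?_)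
    exact ENNReal.tsum_le_tsum fun i => (nmf_cube C f (hUcube i)).le

lemma exists_maximal [CompactSpace X] (F : Set (Set X)) (hF : ∀ R ∈ F, C.IsCube R) :
    ∀ R ∈ F, ∃ M ∈ F, R ⊆ M ∧ ∀ P ∈ F, M ⊆ P → P ⊆ M := by
  classical
  obtain ⟨m0, hm0⟩ : ∃ m : ℕ, diam (univ : Set X) < 4 ^ m :=
    pow_unbounded_of_one_lt _ (by norm_num)
  set n₁ : ℤ := -(m0:ℤ) - 2 with hn₁
  have huniv : ∀ (p : Set X) (n : ℤ), p ∈ C.cubes n → n ≤ n₁ → p = univ := by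
    intro p n hp hn
    refine cube_eq_univ C hp ?_
    have h1 : ((4:ℝ)) ^ (m0:ℤ) ≤ 4 ^ (-n - 2) := by
      apply zpow_le_zpow_right₀ (by norm_num : (1:ℝ) ≤ 4); omega
    calc diam (univ : Set X) < 4 ^ m0 := hm0
      _ = (4:ℝ) ^ (m0:ℤ) := (zpow_natCast 4 m0).symm
      _ ≤ 4 ^ (-n-2) := h1
  set lev : Set X → ℤ := fun R => if h : C.IsCube R then h.choose else 0 with hlevdef
  have hlev : ∀ R ∈ F, R ∈ C.cubes (lev R) := by
    intro R hR
    have h := hF R hR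
    simp only [hlevdef, dif_pos h]
    exact h.choose_spec
  have key : ∀ N : ℕ, ∀ R ∈ F, (lev R - n₁).toNat ≤ N →
      ∃ M ∈ F, R ⊆ M ∧ ∀ P ∈ F, M ⊆ P → P ⊆ M := by
    intro N
    induction N with
    | zero =>
      intro R hR hN
      have hRuniv : R = univ := huniv R _ (hlev R hR) (by omega)
      exact ⟨R, hR, subset_rfl, fun P hP _ => by rw [hRuniv]; exact subset_univ P⟩
    | succ N ih =>
      intro R hR hN
      by_cases hmax : ∀ P ∈ F, R ⊆ P → P ⊆ R
      · exact ⟨R, hR, subset_rfl, hmax⟩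
      · push_neg at hmax
        obtain ⟨P, hP, hRP, hPR⟩ := hmax
        have hss : R ⊂ P := ssubset_of_subset_not_subset hRP hPR
        have hlt : lev P < lev R := cube_level_lt C (hlev R hR) (hlev P hP) hss
        by_cases hR1 : lev R ≤ n₁
        · have : R = univ := huniv R _ (hlev R hR) hR1
          exact absurd (this ▸ subset_univ P) hPR
        · push_neg at hR1
          obtain ⟨M, hM, hPM, hMmax⟩ := ih P hP (by omega)
          exact ⟨M, hM, hRP.trans hPM, hMmax⟩
  exact fun R hR => key _ R hR le_rfl

theorem stmt6_aux [CompactSpace X] (hf : DimFunc f)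
    (A : Set X) (c : ℝ) (hc : 0 < c)
    (h : ∀ q : Set X, C.IsCube q →
      ENNReal.ofReal c * netCont C f q < netCont C f (A ∩ q)) :
    ∀ q : Set X, C.IsCube q → netCont C f (A ∩ q) = netCont C f q := by
  classical
  intro q hq
  haveI : Nonempty X := ⟨(cube_nonempty C hq).choose⟩
  have hne : ∀ s, netCont C f s = nuf C f s := netCont_eq_nuf C f hf
  set ν : OuterMeasure X := nuf C f with hν
  have h' : ∀ p, C.IsCube p → ENNReal.ofReal c * ν p < ν (A ∩ p) := by
    intro p hp; rw [← hne, ← hne]; exact h p hp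
  have hc0 : (ENNReal.ofReal c) ≠ 0 := (ENNReal.ofReal_pos.mpr hc).ne'
  have hcT : (ENNReal.ofReal c) ≠ ⊤ := ENNReal.ofReal_ne_top
  have hAne : ∀ p, C.IsCube p → (A ∩ p).Nonempty := by
    intro p hp
    rw [Set.nonempty_iff_ne_empty]
    intro hemp
    have hcon := h' p hp
    rw [hemp, measure_empty] at hcon
    exact absurd hcon (by simp)
  rw [hne, hne]
  refine le_antisymm (measure_mono inter_subset_right) ?_
  refine ENNReal.le_of_forall_pos_le_add fun ε hε hfin => ?_
  set E : ℝ≥0∞ := (ε:ℝ≥0∞) / 2 with hE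
  have hE0 : E ≠ 0 := by
    rw [hE]
    simp only [ne_eq, ENNReal.div_eq_zero_iff, ENNReal.coe_eq_zero]
    push_neg
    exact ⟨by exact_mod_cast hε.ne', by norm_num⟩
  have hET : E < ⊤ := by
    rw [hE]; exact ENNReal.div_lt_top ENNReal.coe_ne_top (by norm_num)
  have hlt : netCont C f (A ∩ q) < ν (A ∩ q) + E := by
    rw [hne]; exact ENNReal.lt_add_right hfin.ne hE0
  obtain ⟨U, hUcube, hUcov, hUsum⟩ :
      ∃ U : ℕ → Set X, (∀ i, C.IsCube (U i)) ∧ (A ∩ q ⊆ ⋃ i, U i) ∧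
        ∑' i, ENNReal.ofReal (f (diam (U i))) < ν (A ∩ q) + E := by
    rw [netCont] at hlt
    obtain ⟨U, hU⟩ := iInf_lt_iff.mp hlt
    obtain ⟨h1, hU⟩ := iInf_lt_iff.mp hU
    obtain ⟨h2, hU⟩ := iInf_lt_iff.mp hU
    exact ⟨U, h1, h2, hU⟩
  set val : ℕ → ℝ≥0∞ := fun i => ENNReal.ofReal (f (diam (U i))) with hvaldef
  have hSne : ∑' i, val i ≠ ⊤ :=
    (hUsum.trans (ENNReal.add_lt_top.mpr ⟨hfin, hET⟩)).ne
  obtain ⟨K, hK⟩ : ∃ K : ℕ, ∑' i, val (i + K) < ENNReal.ofReal c * E := by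
    have hδpos : 0 < ENNReal.ofReal c * E := ENNReal.mul_pos hc0 hE0
    exact ((ENNReal.tendsto_sum_nat_add val hSne).eventually (gt_mem_nhds hδpos)).exists
  set D : Set X := q \ ⋃ i, U i with hD
  set F : Set (Set X) :=
    {R | C.IsCube R ∧ R ⊆ q ∧ (D ∩ R).Nonempty ∧ ∀ j < K, ¬ U j ⊆ R} with hFdef
  have claimF : ∀ x ∈ D, ∃ R ∈ F, x ∈ R := by
    intro x hx
    obtain ⟨hxq, hxU⟩ := hx
    obtain ⟨n₀, hqn⟩ := hq
    have hex : ∀ t : ℕ, ∃ p ∈ C.cubes (n₀ + t), x ∈ p := by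
      intro t
      have hx' : x ∈ ⋃₀ C.cubes (n₀ + t) := by rw [C.cover]; trivial
      exact Set.mem_sUnion.mp hx'
    choose r hr1 hr2 using hex
    have hrq : ∀ t, r t ⊆ q := by
      intro t
      rcases C.nested (by omega : n₀ ≤ n₀ + (t:ℤ)) _ (hr1 t) _ hqn with h' | h'
      · exact h'
      · exact absurd (h'.le_bot ⟨hr2 t, hxq⟩) (by simp)
    have hmono : ∀ s t : ℕ, s ≤ t → r t ⊆ r s := by
      intro s t hst
      rcases C.nested (by omega : n₀ + (s:ℤ) ≤ n₀ + t) _ (hr1 t) _ (hr1 s) with h' | h'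
      · exact h'
      · exact absurd (h'.le_bot ⟨hr2 t, hr2 s⟩) (by simp)
    have hdlim : Tendsto (fun t : ℕ => 2 * (4:ℝ) ^ (-(n₀ + (t:ℤ)) + 1)) atTop (nhds 0) := by
      have heq : (fun t : ℕ => 2 * (4:ℝ) ^ (-(n₀ + (t:ℤ)) + 1)) =
          fun t : ℕ => (2 * (4:ℝ) ^ (-n₀ + 1)) * (4⁻¹:ℝ) ^ t := by
        funext t
        rw [show -(n₀ + (t:ℤ)) + 1 = (-n₀ + 1) + (-(t:ℤ)) by ring,
          zpow_add₀ (by norm_num : (4:ℝ) ≠ 0), zpow_neg, zpow_natCast, inv_pow]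
        ring
      rw [heq]
      simpa using (tendsto_pow_atTop_nhds_zero_of_lt_one (by norm_num : (0:ℝ) ≤ 4⁻¹)
        (by norm_num : (4⁻¹:ℝ) < 1)).const_mul (2 * (4:ℝ) ^ (-n₀ + 1))
    have hsmall : ∀ j : ℕ, ∃ t : ℕ, ¬ U j ⊆ r t := by
      intro j
      by_contra hcon
      push_neg at hcon
      obtain ⟨y, hy⟩ := cube_nonempty C (hUcube j)
      have hdist : ∀ t : ℕ, dist y x ≤ 2 * (4:ℝ) ^ (-(n₀ + (t:ℤ)) + 1) := by
        intro t
        exact (dist_le_diam_of_mem (cube_isBounded C (hr1 t)) (hcon t hy) (hr2 t)).trans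
          (cube_diam C (hr1 t))
      have hyx : y = x := by
        have := ge_of_tendsto' hdlim hdist
        rwa [← dist_le_zero]
      exact hxU (Set.mem_iUnion.mpr ⟨j, hyx ▸ hy⟩)
    choose T hT using hsmall
    set tm : ℕ := (Finset.range K).sup T with htm
    refine ⟨r tm, ⟨⟨n₀ + tm, hr1 tm⟩, hrq tm, ⟨x, ⟨hxq, hxU⟩, hr2 tm⟩, ?_⟩, hr2 tm⟩
    intro j hj hsub
    exact hT j (hsub.trans (hmono (T j) tm (Finset.le_sup (Finset.mem_range.mpr hj))))
  have hmaxex := exists_maximal C F (fun R hR => hR.1)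
  set G : Set (Set X) := {M | M ∈ F ∧ ∀ P ∈ F, M ⊆ P → P ⊆ M} with hGdef
  have hGF : G ⊆ F := fun M hM => hM.1
  have hFj : ∀ M ∈ F, ∀ a ∈ A ∩ M, ∃ j, K ≤ j ∧ U j ⊆ M ∧ a ∈ U j := by
    intro M hM a ha
    obtain ⟨hMc, hMq, ⟨xM, hxMD, hxMM⟩, hMj⟩ := hM
    obtain ⟨j, haj⟩ := Set.mem_iUnion.mp (hUcov ⟨ha.1, hMq ha.2⟩)
    obtain ⟨nM, hnM⟩ := hMc
    obtain ⟨nj, hnj⟩ := hUcube j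
    rcases cube_subset_of_inter C hnj hnM ⟨a, haj, ha.2⟩ with hsub | hsub
    · refine ⟨j, ?_, hsub, haj⟩
      by_contra hjK; push_neg at hjK
      exact hMj j hjK hsub
    · exact absurd (Set.mem_iUnion.mpr ⟨j, hsub hxMM⟩) hxMD.2
  have bound1 : ∀ M ∈ F, ν (A ∩ M) ≤
      ∑' j, (if K ≤ j ∧ U j ⊆ M then val j else 0) := by
    intro M hM
    have hcov2 : A ∩ M ⊆ ⋃ j, (if K ≤ j ∧ U j ⊆ M then U j else ∅) := by
      intro a ha
      obtain ⟨j, hj1, hj2, hj3⟩ := hFj M hM a ha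
      exact Set.mem_iUnion.mpr ⟨j, by rw [if_pos ⟨hj1, hj2⟩]; exact hj3⟩
    refine (measure_mono hcov2).trans
      ((measure_iUnion_le _).trans (ENNReal.tsum_le_tsum fun j => ?_))
    split_ifs with hcond
    · exact nuf_le_cube C f (hUcube j)
    · simp
  have bound2 : ∀ M ∈ F, ν M ≤
      (ENNReal.ofReal c)⁻¹ * ∑' j, (if K ≤ j ∧ U j ⊆ M then val j else 0) := by
    intro M hM
    have h1 := (h' M hM.1).le.trans (bound1 M hM)
    calc ν M = (ENNReal.ofReal c)⁻¹ * (ENNReal.ofReal c * ν M) := by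
          rw [← mul_assoc, ENNReal.inv_mul_cancel hc0 hcT, one_mul]
      _ ≤ _ := mul_le_mul_right h1 _
  have hGdisj : ∀ M ∈ G, ∀ M' ∈ G, M ≠ M' → Disjoint M M' := by
    intro M hM M' hM' hnemm
    obtain ⟨nM, hnM⟩ := hM.1.1
    obtain ⟨nM', hnM'⟩ := hM'.1.1
    rcases cube_trichotomy C hnM hnM' with hs | hs | hs
    · exact absurd (Set.Subset.antisymm hs (hM.2 M' hM'.1 hs)) hnemm
    · exact absurd (Set.Subset.antisymm hs (hM'.2 M hM.1 hs)).symm hnemm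
    · exact hs
  have hjex : ∀ M ∈ F, ∃ j, K ≤ j ∧ U j ⊆ M := by
    intro M hM
    obtain ⟨a, ha⟩ := hAne M hM.1
    obtain ⟨j, h1, h2, _⟩ := hFj M hM a ha
    exact ⟨j, h1, h2⟩
  have hGc : G.Countable := by
    rw [Set.countable_iff_exists_injOn]
    refine ⟨fun M => if hex : ∃ j, K ≤ j ∧ U j ⊆ M then hex.choose else 0, ?_⟩
    intro M hM M' hM' heq
    simp only at heq
    by_contra hnemm
    have hd := hGdisj M hM M' hM' hnemm
    have e1 := hjex M (hGF hM)
    have e2 := hjex M' (hGF hM')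
    rw [dif_pos e1, dif_pos e2] at heq
    have s1 := e1.choose_spec.2
    have s2 := e2.choose_spec.2
    rw [heq] at s1
    obtain ⟨y, hy⟩ := cube_nonempty C (hUcube e2.choose)
    exact hd.le_bot ⟨s1 hy, s2 hy⟩
  have cover3 : q ⊆ (⋃ i, U i) ∪ ⋃₀ G := by
    intro x hxq
    by_cases hx : x ∈ ⋃ i, U i
    · exact Or.inl hx
    · obtain ⟨R, hRF, hxR⟩ := claimF x ⟨hxq, hx⟩
      obtain ⟨M, hMF, hRM, hMmax⟩ := hmaxex R hRF
      exact Or.inr ⟨M, ⟨hMF, hMmax⟩, hRM hxR⟩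
  haveI := hGc.to_subtype
  have hinner : ∀ j, (∑' M : G, if K ≤ j ∧ U j ⊆ (M:Set X) then val j else 0) ≤
      (if K ≤ j then val j else 0) := by
    intro j
    by_cases hex2 : ∃ M : G, K ≤ j ∧ U j ⊆ (M:Set X)
    · obtain ⟨M₀, hM₀⟩ := hex2
      rw [tsum_eq_single M₀ ?_]
      · rw [if_pos hM₀, if_pos hM₀.1]
      · intro M' hne'
        rw [if_neg]
        rintro ⟨hj, hsub⟩
        have hd := hGdisj _ M'.2 _ M₀.2 (fun hvaleq => hne' (Subtype.ext hvaleq))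
        obtain ⟨y, hy⟩ := cube_nonempty C (hUcube j)
        exact hd.le_bot ⟨hsub hy, hM₀.2 hy⟩
    · have hz : ∀ M : G, (if K ≤ j ∧ U j ⊆ (M:Set X) then val j else 0) = 0 :=
        fun M => if_neg (fun hc2 => hex2 ⟨M, hc2⟩)
      rw [tsum_congr hz, tsum_zero]
      exact zero_le
  have htailb : (∑' j, if K ≤ j then val j else 0) = ∑' i, val (i + K) := by
    have hz : ∑ i ∈ Finset.range K, (if K ≤ i then val i else 0) = 0 :=
      Finset.sum_eq_zero fun i hi => if_neg (by simp at hi; omega)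
    calc (∑' j, if K ≤ j then val j else 0)
        = (∑ i ∈ Finset.range K, if K ≤ i then val i else 0) +
          ∑' i, (if K ≤ i + K then val (i + K) else 0) :=
          (ENNReal.summable.sum_add_tsum_nat_add').symm
      _ = ∑' i, val (i + K) := by
          rw [hz, zero_add]
          exact tsum_congr fun i => if_pos (by omega)
  calc ν q ≤ ν ((⋃ i, U i) ∪ ⋃₀ G) := measure_mono cover3
    _ ≤ ν (⋃ i, U i) + ν (⋃₀ G) := measure_union_le _ _
    _ ≤ (∑' i, val i) + (ENNReal.ofReal c)⁻¹ * (ENNReal.ofReal c * E) := by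
        refine add_le_add ?_ ?_
        · exact (measure_iUnion_le U).trans
            (ENNReal.tsum_le_tsum fun i => nuf_le_cube C f (hUcube i))
        · have hsU : ν (⋃₀ G) ≤ ∑' M : G, ν M := by
            rw [Set.sUnion_eq_iUnion]; exact measure_iUnion_le _
          refine hsU.trans ?_
          have hstep : (∑' M : G, ν M) ≤ (ENNReal.ofReal c)⁻¹ *
              ∑' M : G, ∑' j, (if K ≤ j ∧ U j ⊆ (M:Set X) then val j else 0) := by
            rw [← ENNReal.tsum_mul_left]
            exact ENNReal.tsum_le_tsum fun M => bound2 M (hGF M.2)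
          refine hstep.trans (mul_le_mul_right ?_ _)
          calc (∑' M : G, ∑' j, if K ≤ j ∧ U j ⊆ (M:Set X) then val j else 0)
              = ∑' j, ∑' M : G, (if K ≤ j ∧ U j ⊆ (M:Set X) then val j else 0) :=
              ENNReal.tsum_comm
            _ ≤ ∑' j, (if K ≤ j then val j else 0) := ENNReal.tsum_le_tsum hinner
            _ = ∑' i, val (i + K) := htailb
            _ ≤ ENNReal.ofReal c * E := hK.le
    _ ≤ (ν (A ∩ q) + E) + E := by
        rw [← mul_assoc, ENNReal.inv_mul_cancel hc0 hcT, one_mul]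
        exact add_le_add hUsum.le le_rfl
    _ = ν (A ∩ q) + ε := by rw [add_assoc, hE, ENNReal.add_halves]

end Stmt6Aux

/-- a uniform net-content lower bound `N^f(A ∩ Q) > c·N^f(Q)` over all
generalised cubes upgrades itself to equality `N^f(A ∩ Q) = N^f(Q)`. -/
theorem stmt6 {X : Type*} [MetricSpace X] [CompactSpace X]
    [MeasurableSpace X] [BorelSpace X]
    (C : CubeSystem X) (f : ℝ → ℝ) (hf : DimFunc f)
    (A : Set X) (hA : MeasurableSet A) (c : ℝ) (hc : 0 < c)
    (h : ∀ q : Set X, C.IsCube q →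
      ENNReal.ofReal c * netCont C f q < netCont C f (A ∩ q)) :
    ∀ q : Set X, C.IsCube q → netCont C f (A ∩ q) = netCont C f q := by
  intro q hq
  exact stmt6_aux C f hf A c hc h q hq
end

section
/- Let X be a compact metric space with generalised dyadic cubes Q and net content N^f, A ⊆ X Borel, f a dimension function. If there is c > 0 with N^f(A ∩ Q) > c·N^f(Q) for every generalised cube Q, then N^f(A ∩ U) = N^f(U) for every non-empty open set U ⊆ X. -/
open Metric Set ENNReal Filter MeasureTheory

section NetLemmas

set_option linter.unusedSectionVars false

variable {X : Type*} [MetricSpace X] [CompactSpace X] {C : CubeSystem X} {f : ℝ → ℝ}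

namespace CubeSystem

lemma cube_nonempty {q : Set X} {n : ℤ} (hq : q ∈ C.cubes n) : q.Nonempty := by
  obtain ⟨x, h1, -⟩ := C.comparable n q hq
  exact ⟨x, h1 (mem_ball_self (by positivity))⟩

lemma isCube_nonempty {q : Set X} (hq : C.IsCube q) : q.Nonempty := by
  obtain ⟨n, hn⟩ := hq; exact cube_nonempty hn

lemma diam_cube_le {q : Set X} {n : ℤ} (hq : q ∈ C.cubes n) :
    diam q ≤ 2 * (4:ℝ) ^ (-n + 1) := by
  obtain ⟨x, -, h2⟩ := C.comparable n q hq
  exact le_trans (diam_mono h2 isBounded_ball) (diam_ball (by positivity))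

lemma exists_mem_level (C : CubeSystem X) (n : ℤ) (x : X) : ∃ q ∈ C.cubes n, x ∈ q := by
  have hx : x ∈ ⋃₀ C.cubes n := by rw [C.cover n]; trivial
  simpa [Set.mem_sUnion] using hx

lemma exists_small_cube (C : CubeSystem X) (x : X) {ρ : ℝ} (hρ : 0 < ρ) :
    ∃ (n : ℤ) (q : Set X), q ∈ C.cubes n ∧ x ∈ q ∧ q ⊆ ball x ρ ∧ diam q ≤ ρ := by
  obtain ⟨k, hk⟩ := exists_pow_lt_of_lt_one (div_pos hρ (by norm_num : (0:ℝ) < 8))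
    (by norm_num : (1/4:ℝ) < 1)
  have h4 : (4:ℝ) ^ (-(k:ℤ) + 1) = 4 * ((1/4:ℝ)) ^ k := by
    rw [zpow_add₀ (by norm_num : (4:ℝ) ≠ 0), zpow_neg, zpow_natCast, zpow_one, one_div, inv_pow]
    ring
  have key : 2 * (4:ℝ) ^ (-(k:ℤ) + 1) < ρ := by
    rw [h4]
    nlinarith [hk]
  obtain ⟨q, hq, hxq⟩ := C.exists_mem_level (k:ℤ) x
  have hdiam : diam q ≤ 2 * (4:ℝ) ^ (-(k:ℤ) + 1) := diam_cube_le hq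
  have hbd : Bornology.IsBounded q := by
    obtain ⟨y, -, h2⟩ := C.comparable (k:ℤ) q hq
    exact isBounded_ball.subset h2
  refine ⟨(k:ℤ), q, hq, hxq, ?_, hdiam.trans key.le⟩
  intro z hz
  rw [mem_ball]
  calc dist z x ≤ diam q := dist_le_diam_of_mem hbd hz hxq
    _ ≤ 2 * (4:ℝ) ^ (-(k:ℤ) + 1) := hdiam
    _ < ρ := key

lemma countable_level (C : CubeSystem X) (n : ℤ) : (C.cubes n).Countable := by
  classical
  obtain ⟨D, hDc, hDd⟩ := TopologicalSpace.exists_countable_dense X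
  have hpick : ∀ q : ↥(C.cubes n), ∃ d, d ∈ D ∧ d ∈ (q : Set X) := by
    intro q
    obtain ⟨x, h1, -⟩ := C.comparable n q q.2
    obtain ⟨d, hd1, hd2⟩ := hDd.inter_open_nonempty (ball x ((4:ℝ) ^ (-n - 2))) isOpen_ball
      ⟨x, mem_ball_self (by positivity)⟩
    exact ⟨d, hd2, h1 hd1⟩
  choose g hg1 hg2 using hpick
  haveI : Countable ↥D := hDc.to_subtype
  rw [← Set.countable_coe_iff]
  refine Function.Injective.countable (f := fun q : ↥(C.cubes n) => (⟨g q, hg1 q⟩ : ↥D)) ?_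
  intro q q' he
  have he' : g q = g q' := congrArg Subtype.val he
  by_contra hne
  have hne' : (q : Set X) ≠ (q' : Set X) := fun hh => hne (Subtype.ext hh)
  have hdis := C.pdisj n q.2 q'.2 hne'
  exact Set.disjoint_left.mp hdis (hg2 q) (he' ▸ hg2 q')

lemma isCube_univ (C : CubeSystem X) [Nonempty X] : C.IsCube (univ : Set X) := by
  obtain ⟨k, hk⟩ := pow_unbounded_of_one_lt (diam (univ : Set X)) (by norm_num : (1:ℝ) < 4)
  set n : ℤ := -(k:ℤ) - 2 with hn
  obtain ⟨q, hq, -⟩ := C.exists_mem_level n (Classical.arbitrary X)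
  obtain ⟨x, h1, -⟩ := C.comparable n q hq
  have hqu : q = univ := by
    apply Set.eq_univ_of_univ_subset
    intro z _
    apply h1
    rw [mem_ball]
    have he : -n - 2 = (k:ℤ) := by omega
    calc dist z x ≤ diam (univ : Set X) :=
          dist_le_diam_of_mem isCompact_univ.isBounded trivial trivial
      _ < 4 ^ k := hk
      _ = (4:ℝ) ^ ((k:ℤ)) := (zpow_natCast _ _).symm
      _ = (4:ℝ) ^ (-n - 2) := by rw [he]
  exact ⟨n, hqu ▸ hq⟩

end CubeSystem

open CubeSystem

lemma exists_cheap_cube [Nonempty X] (C : CubeSystem X) (hf : DimFunc f) {ε : ℝ≥0∞}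
    (hε : 0 < ε) : ∃ q, C.IsCube q ∧ ENNReal.ofReal (f (diam q)) < ε := by
  obtain ⟨δ, hδ0, hδ1, hδ2⟩ := ENNReal.lt_iff_exists_real_btwn.mp hε
  have hδpos : 0 < δ := ENNReal.ofReal_pos.mp (lt_of_le_of_lt zero_le hδ1)
  obtain ⟨r, hr, hfr⟩ := Metric.continuousAt_iff.mp hf.continuous.continuousAt δ hδpos
  have h2 : f (r/2) < δ := by
    have hd : dist (r/2) 0 < r := by
      rw [Real.dist_eq, sub_zero, abs_of_pos (by linarith)]; linarith
    have := hfr hd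
    rw [Real.dist_eq, hf.map_zero, sub_zero] at this
    exact lt_of_le_of_lt (le_abs_self _) this
  obtain ⟨n, q, hqn, -, -, hdiam⟩ := C.exists_small_cube (Classical.arbitrary X) (half_pos hr)
  refine ⟨q, ⟨n, hqn⟩, ?_⟩
  calc ENNReal.ofReal (f (diam q)) ≤ ENNReal.ofReal (f (r/2)) :=
        ENNReal.ofReal_le_ofReal (hf.mono hdiam)
    _ < ENNReal.ofReal δ := (ENNReal.ofReal_lt_ofReal_iff hδpos).mpr h2
    _ < ε := hδ2

lemma netCont_le (S : Set X) (V : ℕ → Set X) (h1 : ∀ i, C.IsCube (V i))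
    (h2 : S ⊆ ⋃ i, V i) :
    netCont C f S ≤ ∑' i, ENNReal.ofReal (f (diam (V i))) := by
  exact (iInf_le _ V).trans ((iInf_le _ h1).trans (iInf_le _ h2))

lemma netCont_mono {S T : Set X} (hST : S ⊆ T) : netCont C f S ≤ netCont C f T := by
  refine le_iInf fun V => le_iInf fun h1 => le_iInf fun h2 => ?_
  exact netCont_le S V h1 (hST.trans h2)

lemma exists_cover_of_lt {S : Set X} {r : ℝ≥0∞} (hlt : netCont C f S < r) :
    ∃ V : ℕ → Set X, (∀ i, C.IsCube (V i)) ∧ S ⊆ ⋃ i, V i ∧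
      ∑' i, ENNReal.ofReal (f (diam (V i))) < r := by
  simp only [netCont, iInf_lt_iff] at hlt
  obtain ⟨V, h1, h2, h3⟩ := hlt
  exact ⟨V, h1, h2, h3⟩

lemma tsum_half_pow_le : (∑' n : ℕ, ((2:ℝ≥0∞))⁻¹ ^ (n+1)) = 1 := by
  simp_rw [pow_succ]
  rw [ENNReal.tsum_mul_right, ENNReal.tsum_geometric, ENNReal.one_sub_inv_two]
  exact ENNReal.inv_mul_cancel (by simp) (by simp)

lemma netCont_le_tsum [Nonempty X] (hf : DimFunc f) {S : Set X} {ι : Type*} [Countable ι]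
    (Q : ι → Set X) (hQ : ∀ i, C.IsCube (Q i)) (hcov : S ⊆ ⋃ i, Q i) :
    netCont C f S ≤ ∑' i, ENNReal.ofReal (f (diam (Q i))) := by
  classical
  refine ENNReal.le_of_forall_pos_le_add fun ε hε _ => ?_
  obtain ⟨e, he⟩ := exists_injective_nat ι
  have hpad : ∀ k : ℕ, ∃ q, C.IsCube q ∧
      ENNReal.ofReal (f (diam q)) < (ε:ℝ≥0∞) * (2:ℝ≥0∞)⁻¹ ^ (k+1) := by
    intro k
    refine exists_cheap_cube C hf (ENNReal.mul_pos ?_ ?_)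
    · exact_mod_cast hε.ne'
    · exact pow_ne_zero _ (by simp)
  choose p hp1 hp2 using hpad
  set V : ℕ → Set X := fun k => if hk : ∃ i, e i = k then Q hk.choose else p k with hV
  have hVcube : ∀ k, C.IsCube (V k) := by
    intro k; rw [hV]; dsimp only; split_ifs with hk
    · exact hQ _
    · exact hp1 k
  have hVe : ∀ i, V (e i) = Q i := by
    intro i
    have hk : ∃ j, e j = e i := ⟨i, rfl⟩
    simp only [hV, dif_pos hk]
    exact congrArg Q (he hk.choose_spec)
  have hVcov : S ⊆ ⋃ k, V k := by
    intro x hx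
    obtain ⟨i, hi⟩ := Set.mem_iUnion.mp (hcov hx)
    exact Set.mem_iUnion.mpr ⟨e i, by rw [hVe i]; exact hi⟩
  refine le_trans (netCont_le S V hVcube hVcov) ?_
  have hptw : ∀ k, ENNReal.ofReal (f (diam (V k))) ≤
      (Set.range e).indicator (fun k => ENNReal.ofReal (f (diam (V k)))) k
        + (ε:ℝ≥0∞) * (2:ℝ≥0∞)⁻¹ ^ (k+1) := by
    intro k
    by_cases hk : ∃ i, e i = k
    · rw [Set.indicator_of_mem (by exact ⟨hk.choose, hk.choose_spec⟩ : k ∈ Set.range e)]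
      exact le_self_add
    · rw [Set.indicator_of_notMem (by simpa [Set.mem_range] using hk)]
      rw [zero_add]
      have : V k = p k := by rw [hV]; exact dif_neg hk
      rw [this]
      exact (hp2 k).le
  calc ∑' k, ENNReal.ofReal (f (diam (V k)))
      ≤ ∑' k, ((Set.range e).indicator (fun k => ENNReal.ofReal (f (diam (V k)))) k
          + (ε:ℝ≥0∞) * (2:ℝ≥0∞)⁻¹ ^ (k+1)) := ENNReal.tsum_le_tsum hptw
    _ = (∑' k, (Set.range e).indicator (fun k => ENNReal.ofReal (f (diam (V k)))) k)
          + ∑' k, (ε:ℝ≥0∞) * (2:ℝ≥0∞)⁻¹ ^ (k+1) := ENNReal.tsum_add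
    _ ≤ (∑' i, ENNReal.ofReal (f (diam (Q i)))) + (ε:ℝ≥0∞) := by
        refine add_le_add ?_ ?_
        · rw [← tsum_subtype]
          rw [← (Equiv.ofInjective e he).tsum_eq
            (fun x : ↥(Set.range e) => ENNReal.ofReal (f (diam (V ↑x))))]
          refine le_of_eq (tsum_congr fun i => ?_)
          have : ((Equiv.ofInjective e he) i : ℕ) = e i := rfl
          rw [this, hVe]
        · rw [ENNReal.tsum_mul_left, tsum_half_pow_le, mul_one]

lemma netCont_iUnion_le [Nonempty X] (hf : DimFunc f) {ι : Type*} [Countable ι]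
    (S : ι → Set X) :
    netCont C f (⋃ i, S i) ≤ ∑' i, netCont C f (S i) := by
  refine ENNReal.le_of_forall_pos_le_add fun ε hε htop => ?_
  obtain ⟨e, he⟩ := exists_injective_nat ι
  have hfin : ∀ i, netCont C f (S i) <
      netCont C f (S i) + (ε:ℝ≥0∞) * (2:ℝ≥0∞)⁻¹ ^ (e i + 1) := by
    intro i
    refine lt_add_right (ne_top_of_le_ne_top htop.ne (ENNReal.le_tsum i)) ?_
    exact ENNReal.mul_pos (by exact_mod_cast hε.ne') (pow_ne_zero _ (by simp)) |>.ne'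
  have hch : ∀ i, ∃ V : ℕ → Set X, (∀ k, C.IsCube (V k)) ∧ S i ⊆ ⋃ k, V k ∧
      ∑' k, ENNReal.ofReal (f (diam (V k))) <
        netCont C f (S i) + (ε:ℝ≥0∞) * (2:ℝ≥0∞)⁻¹ ^ (e i + 1) :=
    fun i => exists_cover_of_lt (hfin i)
  choose V hV1 hV2 hV3 using hch
  have hcov : (⋃ i, S i) ⊆ ⋃ z : ι × ℕ, V z.1 z.2 := by
    intro x hx
    obtain ⟨i, hi⟩ := Set.mem_iUnion.mp hx
    obtain ⟨k, hk⟩ := Set.mem_iUnion.mp (hV2 i hi)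
    exact Set.mem_iUnion.mpr ⟨(i, k), hk⟩
  refine le_trans (netCont_le_tsum hf (fun z : ι × ℕ => V z.1 z.2)
    (fun z => hV1 z.1 z.2) hcov) ?_
  rw [ENNReal.tsum_prod (f := fun i k => ENNReal.ofReal (f (diam (V i k))))]
  calc ∑' i, ∑' k, ENNReal.ofReal (f (diam (V i k)))
      ≤ ∑' i, (netCont C f (S i) + (ε:ℝ≥0∞) * (2:ℝ≥0∞)⁻¹ ^ (e i + 1)) :=
        ENNReal.tsum_le_tsum fun i => (hV3 i).le
    _ = (∑' i, netCont C f (S i)) + ∑' i, (ε:ℝ≥0∞) * (2:ℝ≥0∞)⁻¹ ^ (e i + 1) :=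
        ENNReal.tsum_add
    _ ≤ (∑' i, netCont C f (S i)) + (ε:ℝ≥0∞) := by
        refine add_le_add le_rfl ?_
        calc ∑' i, (ε:ℝ≥0∞) * (2:ℝ≥0∞)⁻¹ ^ (e i + 1)
            = (ε:ℝ≥0∞) * ∑' i, (2:ℝ≥0∞)⁻¹ ^ (e i + 1) := ENNReal.tsum_mul_left
          _ ≤ (ε:ℝ≥0∞) * ∑' n : ℕ, (2:ℝ≥0∞)⁻¹ ^ (n + 1) := by
              refine mul_le_mul_right ?_ _
              exact Summable.tsum_le_tsum_of_inj e he (fun _ _ => zero_le) (fun i => le_rfl)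
                ENNReal.summable ENNReal.summable
          _ = (ε:ℝ≥0∞) := by rw [tsum_half_pow_le, mul_one]

lemma netCont_union_le [Nonempty X] (hf : DimFunc f) (s t : Set X) :
    netCont C f (s ∪ t) ≤ netCont C f s + netCont C f t := by
  have h := netCont_iUnion_le (C := C) hf (fun b : Bool => bif b then s else t)
  rw [← Set.union_eq_iUnion, tsum_bool] at h
  simpa [add_comm] using h

lemma netCont_cube_le (hf : DimFunc f) {q : Set X} (hq : C.IsCube q) :
    netCont C f q ≤ ENNReal.ofReal (f (diam q)) := by
  haveI : Nonempty X := ⟨(isCube_nonempty hq).choose⟩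
  have h := netCont_le_tsum (C := C) hf (fun _ : Unit => q) (fun _ => hq)
    (by rw [Set.iUnion_const] : q ⊆ ⋃ _ : Unit, q)
  rwa [tsum_eq_single () (fun b hb => (hb (Subsingleton.elim b _)).elim)] at h

end NetLemmas
section NetLemmas2

set_option linter.unusedSectionVars false
set_option maxHeartbeats 1000000

open CubeSystem

variable {X : Type*} [MetricSpace X] [CompactSpace X] {C : CubeSystem X} {f : ℝ → ℝ}

/-- The key cube lemma: any countable cube cover of `A ∩ P` has total weight at
least the net content of the cube `P`. -/
lemma cube_bound (hf : DimFunc f) {A : Set X} {c : ℝ} (hc : 0 < c)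
    (h : ∀ q : Set X, C.IsCube q →
      ENNReal.ofReal c * netCont C f q < netCont C f (A ∩ q))
    {P : Set X} {nP : ℤ} (hP : P ∈ C.cubes nP)
    {ι : Type*} [Countable ι] (Q : ι → Set X) (hQ : ∀ i, C.IsCube (Q i))
    (hcov : A ∩ P ⊆ ⋃ i, Q i) :
    netCont C f P ≤ ∑' i, ENNReal.ofReal (f (diam (Q i))) := by
  classical
  haveI : Nonempty X := ⟨(cube_nonempty hP).choose⟩
  set a : ι → ℝ≥0∞ := fun i => ENNReal.ofReal (f (diam (Q i))) with ha
  refine ENNReal.le_of_forall_pos_le_add fun ε hε hStop => ?_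
  have hSne : (∑' i, a i) ≠ ⊤ := hStop.ne
  choose m hm using hQ
  have hc0 : ENNReal.ofReal c ≠ 0 := (ENNReal.ofReal_pos.mpr hc).ne'
  set η : ℝ≥0∞ := ENNReal.ofReal c * (ε : ℝ≥0∞) with hη
  have hη0 : η ≠ 0 := ENNReal.mul_pos hc0 (by exact_mod_cast hε.ne') |>.ne'
  -- a finite set catching all but η of the total mass
  obtain ⟨F, hF⟩ : ∃ F : Finset ι, (∑' i, a i) ≤ ∑ i ∈ F, a i + η := by
    rcases le_or_gt (∑' i, a i) η with hle | hlt
    · exact ⟨∅, by simpa using hle⟩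
    · have hS0 : (∑' i, a i) ≠ 0 := by
        intro h0; rw [h0] at hlt; exact absurd hlt (not_lt_of_ge zero_le)
      have hsub : (∑' i, a i) - η < ∑' i, a i := ENNReal.sub_lt_self hSne hS0 hη0
      have h2 : (∑' i, a i) - η < ⨆ F : Finset ι, ∑ i ∈ F, a i := by
        rwa [← ENNReal.tsum_eq_iSup_sum]
      obtain ⟨F, hF⟩ := lt_iSup_iff.mp h2
      exact ⟨F, tsub_le_iff_right.mp hF.le⟩
  -- a level below every cube in F
  obtain ⟨B, hB⟩ : ∃ B : ℤ, ∀ i ∈ F, m i ≤ B := by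
    obtain ⟨B, hB⟩ := (F.image m).bddAbove
    exact ⟨B, fun i hi => hB (Finset.mem_coe.mpr (Finset.mem_image_of_mem m hi))⟩
  set n : ℤ := max (nP + 1) (B + 1) with hn
  have hnP : nP ≤ n := le_trans (by omega) (le_max_left _ _)
  -- the residual cubes at level n
  set T : Set (Set X) := {p | p ∈ C.cubes n ∧ p ⊆ P ∧ ∀ i, ¬ p ⊆ Q i} with hT
  have hTcount : T.Countable := (C.countable_level n).mono fun p hp => hp.1
  haveI := hTcount.to_subtype
  -- covering P
  have hcover : P ⊆ (⋃ i, Q i) ∪ ⋃ p : ↥T, (p : Set X) := by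
    intro x hx
    obtain ⟨p, hpn, hxp⟩ := C.exists_mem_level n x
    have hpP : p ⊆ P := by
      rcases C.nested hnP p hpn P hP with hsub | hdis
      · exact hsub
      · exact (Set.disjoint_left.mp hdis hxp hx).elim
    by_cases hex : ∃ i, p ⊆ Q i
    · exact Or.inl (Set.mem_iUnion.mpr ⟨hex.choose, hex.choose_spec hxp⟩)
    · push_neg at hex
      exact Or.inr (Set.mem_iUnion.mpr ⟨⟨p, hpn, hpP, fun i => hex i⟩, hxp⟩)
  -- the per-residual-cube estimate
  have hper : ∀ p : ↥T, netCont C f (p : Set X) ≤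
      (ENNReal.ofReal c)⁻¹ *
        ∑' i, Set.indicator {i | n < m i ∧ Q i ⊆ (p : Set X)} a i := by
    intro p
    obtain ⟨hpn, hpP, hpnot⟩ := p.2
    have hcov' : A ∩ (p : Set X) ⊆
        ⋃ i : {i | n < m i ∧ Q i ⊆ (p : Set X)}, Q ↑i := by
      rintro y ⟨hyA, hyp⟩
      obtain ⟨i, hyi⟩ := Set.mem_iUnion.mp (hcov ⟨hyA, hpP hyp⟩)
      have hni : n < m i := by
        by_contra hle
        push_neg at hle
        rcases C.nested hle (p : Set X) hpn (Q i) (hm i) with hsub | hdis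
        · exact hpnot i hsub
        · exact Set.disjoint_left.mp hdis hyp hyi
      rcases C.nested hni.le (Q i) (hm i) (p : Set X) hpn with hsub | hdis
      · exact Set.mem_iUnion.mpr ⟨⟨i, hni, hsub⟩, hyi⟩
      · exact (Set.disjoint_left.mp hdis hyi hyp).elim
    have hlt := h (p : Set X) ⟨n, hpn⟩
    have hle2 : netCont C f (A ∩ (p : Set X)) ≤
        ∑' i : {i | n < m i ∧ Q i ⊆ (p : Set X)}, a ↑i :=
      netCont_le_tsum hf _ (fun i => ⟨m ↑i, hm ↑i⟩) hcov'
    rw [tsum_subtype] at hle2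
    have hkey : ENNReal.ofReal c * netCont C f (p : Set X) ≤
        ∑' i, Set.indicator {i | n < m i ∧ Q i ⊆ (p : Set X)} a i :=
      le_trans hlt.le hle2
    calc netCont C f (p : Set X)
        = (ENNReal.ofReal c)⁻¹ * (ENNReal.ofReal c * netCont C f (p : Set X)) := by
          rw [← mul_assoc, ENNReal.inv_mul_cancel hc0 ENNReal.ofReal_ne_top, one_mul]
      _ ≤ _ := mul_le_mul_right hkey _
  -- assembling
  have step1 : netCont C f P ≤ (∑' i, a i) + ∑' p : ↥T, netCont C f (p : Set X) := by
    refine le_trans (le_trans (netCont_mono hcover) (netCont_union_le hf _ _)) ?_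
    refine add_le_add ?_ ?_
    · exact netCont_le_tsum hf Q (fun i => ⟨m i, hm i⟩) subset_rfl
    · exact netCont_iUnion_le hf (fun p : ↥T => (p : Set X))
  set tail : ι → ℝ≥0∞ := fun i => if n < m i then a i else 0 with htail
  have step2 : (∑' p : ↥T, netCont C f (p : Set X)) ≤
      (ENNReal.ofReal c)⁻¹ * ∑' i, tail i := by
    calc ∑' p : ↥T, netCont C f (p : Set X)
        ≤ ∑' p : ↥T, (ENNReal.ofReal c)⁻¹ *
            ∑' i, Set.indicator {i | n < m i ∧ Q i ⊆ (p : Set X)} a i :=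
          ENNReal.tsum_le_tsum hper
      _ = (ENNReal.ofReal c)⁻¹ * ∑' p : ↥T,
            ∑' i, Set.indicator {i | n < m i ∧ Q i ⊆ (p : Set X)} a i :=
          ENNReal.tsum_mul_left
      _ ≤ (ENNReal.ofReal c)⁻¹ * ∑' i, tail i := by
          refine mul_le_mul_right ?_ _
          rw [ENNReal.tsum_comm]
          refine ENNReal.tsum_le_tsum fun i => ?_
          by_cases hex : ∃ p : ↥T, i ∈ {i | n < m i ∧ Q i ⊆ (p : Set X)}
          · obtain ⟨p₀, hp₀⟩ := hex
            rw [tsum_eq_single p₀ ?_]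
            · rw [Set.indicator_of_mem hp₀]
              simp only [htail]
              rw [if_pos hp₀.1]
            · intro p hp
              refine Set.indicator_of_notMem (fun hmem => ?_) _
              have hQne := cube_nonempty (hm i)
              have hnd : ¬ Disjoint (p : Set X) (p₀ : Set X) :=
                Set.not_disjoint_iff.mpr
                  ⟨hQne.choose, hmem.2 hQne.choose_spec, hp₀.2 hQne.choose_spec⟩
              exact hp (Subtype.ext ((C.pdisj n).elim p.2.1 p₀.2.1 hnd))
          · push_neg at hex
            rw [ENNReal.tsum_eq_zero.mpr fun p => Set.indicator_of_notMem (hex p) _]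
            exact zero_le
  have step3 : (∑' i, tail i) ≤ η := by
    have hsupp : ∀ i, tail i ≤ Set.indicator ((F : Set ι))ᶜ a i := by
      intro i
      by_cases hiF : i ∈ F
      · have : ¬ n < m i := by
          have := hB i hiF
          omega
        simp only [htail]
        rw [if_neg this]
        exact zero_le
      · rw [Set.indicator_of_mem (by simpa using hiF)]
        simp only [htail]
        split_ifs
        · exact le_rfl
        · exact zero_le
    have h1 : (∑' i, tail i) ≤ ∑' i : ↥((F : Set ι))ᶜ, a ↑i := by
      rw [tsum_subtype]
      exact ENNReal.tsum_le_tsum hsupp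
    have h2 : (∑ i ∈ F, a i) + ∑' i : ↥((F : Set ι))ᶜ, a ↑i = ∑' i, a i := by
      have := Summable.tsum_add_tsum_compl (s := (F : Set ι)) (f := a)
        ENNReal.summable ENNReal.summable
      rwa [Finset.tsum_subtype' F a] at this
    have h3 : (∑ i ∈ F, a i) + ∑' i : ↥((F : Set ι))ᶜ, a ↑i ≤ (∑ i ∈ F, a i) + η := by
      rw [h2]; exact hF
    have h4 : (∑' i : ↥((F : Set ι))ᶜ, a ↑i) ≤ η :=
      (ENNReal.add_le_add_iff_left (ne_top_of_le_ne_top hSne (ENNReal.sum_le_tsum F))).mp h3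
    exact h1.trans h4
  have hfinal : netCont C f P ≤ (∑' i, a i) + (ENNReal.ofReal c)⁻¹ * η := by
    refine step1.trans (add_le_add le_rfl ?_)
    exact step2.trans (mul_le_mul_right step3 _)
  have hcalc : (ENNReal.ofReal c)⁻¹ * η = (ε : ℝ≥0∞) := by
    rw [hη, ← mul_assoc, ENNReal.inv_mul_cancel hc0 ENNReal.ofReal_ne_top, one_mul]
  rwa [hcalc] at hfinal

/-- Decomposition of a proper nonempty open set into disjoint cubes. -/
lemma open_decomp (C : CubeSystem X) {U : Set X} (hU : IsOpen U) (hne : U.Nonempty)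
    (hnu : U ≠ univ) :
    ∃ 𝒬 : Set (Set X), 𝒬.Countable ∧ (∀ P ∈ 𝒬, ∃ n, P ∈ C.cubes n) ∧
      (∀ P ∈ 𝒬, P ⊆ U) ∧ U ⊆ ⋃₀ 𝒬 ∧ 𝒬.PairwiseDisjoint id := by
  classical
  haveI : Nonempty X := ⟨hne.choose⟩
  set Q : Set (Set X) :=
    {p | ∃ n : ℤ, p ∈ C.cubes n ∧ p ⊆ U ∧
      ∀ m' : ℤ, m' < n → ∀ q ∈ C.cubes m', p ⊆ q → ¬ q ⊆ U} with hQdef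
  have hcount : Q.Countable := by
    refine Set.Countable.mono ?_ (Set.countable_iUnion fun n : ℤ => C.countable_level n)
    rintro p ⟨n, hp, -⟩
    exact Set.mem_iUnion.mpr ⟨n, hp⟩
  obtain ⟨z, hz⟩ : ∃ z, z ∉ U := by
    by_contra hzz
    push_neg at hzz
    exact hnu (Set.eq_univ_of_forall hzz)
  obtain ⟨k, hk⟩ := pow_unbounded_of_one_lt (diam (univ : Set X)) (by norm_num : (1:ℝ) < 4)
  have hbdd : ∀ nn : ℤ, ∀ q ∈ C.cubes nn, q ⊆ U → -(k:ℤ) - 2 ≤ nn := by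
    intro nn q hq hqU
    by_contra hlt
    push_neg at hlt
    obtain ⟨x, h1, -⟩ := C.comparable nn q hq
    have h4 : (4:ℝ) ^ ((k:ℤ)) ≤ (4:ℝ) ^ (-nn - 2) :=
      zpow_le_zpow_right₀ (by norm_num) (by omega)
    have hzb : z ∈ ball x ((4:ℝ) ^ (-nn - 2)) := by
      rw [mem_ball]
      calc dist z x ≤ diam (univ : Set X) :=
            dist_le_diam_of_mem isCompact_univ.isBounded trivial trivial
        _ < 4 ^ k := hk
        _ = (4:ℝ) ^ ((k:ℤ)) := (zpow_natCast _ _).symm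
        _ ≤ _ := h4
    exact hz (hqU (h1 hzb))
  have hcov : U ⊆ ⋃₀ Q := by
    intro x hx
    obtain ⟨ρ, hρ, hball⟩ := Metric.isOpen_iff.mp hU x hx
    obtain ⟨n₁, q₁, hq₁, hxq₁, hq₁b, -⟩ := C.exists_small_cube x hρ
    have hinh : ∃ nn : ℤ, ∃ q, q ∈ C.cubes nn ∧ x ∈ q ∧ q ⊆ U :=
      ⟨n₁, q₁, hq₁, hxq₁, hq₁b.trans hball⟩
    obtain ⟨n₀, ⟨q₀, hq₀, hxq₀, hq₀U⟩, hmin⟩ :=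
      Int.exists_least_of_bdd (P := fun nn => ∃ q, q ∈ C.cubes nn ∧ x ∈ q ∧ q ⊆ U)
        ⟨-(k:ℤ) - 2, fun nn ⟨q, hq, _, hqU⟩ => hbdd nn q hq hqU⟩ hinh
    refine ⟨q₀, ⟨n₀, hq₀, hq₀U, ?_⟩, hxq₀⟩
    intro m' hm' q hq hq₀q hqU
    exact absurd (hmin m' ⟨q, hq, hq₀q hxq₀, hqU⟩) (by omega)
  have hdisj : Q.PairwiseDisjoint id := by
    have key : ∀ (p₁ p₂ : Set X) (n₁ n₂ : ℤ), n₁ ≤ n₂ →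
        p₁ ∈ C.cubes n₁ → p₁ ⊆ U →
        p₂ ∈ C.cubes n₂ → p₂ ⊆ U →
        (∀ m' : ℤ, m' < n₂ → ∀ q ∈ C.cubes m', p₂ ⊆ q → ¬ q ⊆ U) →
        p₁ ≠ p₂ → Disjoint p₂ p₁ := by
      intro p₁ p₂ n₁ n₂ hle hp₁ hU₁ hp₂ hU₂ hmin₂ hne'
      rcases C.nested hle p₂ hp₂ p₁ hp₁ with hsub | hdis
      · rcases lt_or_eq_of_le hle with hlt | heq
        · exact absurd hU₁ (hmin₂ n₁ hlt p₁ hp₁ hsub)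
        · subst heq
          exact C.pdisj n₁ hp₂ hp₁ (Ne.symm hne')
      · exact hdis
    rintro p₁ ⟨n₁, hp₁, hU₁, hmin₁⟩ p₂ ⟨n₂, hp₂, hU₂, hmin₂⟩ hne'
    rcases le_total n₁ n₂ with hle | hle
    · exact (key p₁ p₂ n₁ n₂ hle hp₁ hU₁ hp₂ hU₂ hmin₂ hne').symm
    · exact key p₂ p₁ n₂ n₁ hle hp₂ hU₂ hp₁ hU₁ hmin₁ (Ne.symm hne')
  exact ⟨Q, hcount, fun P hP => ⟨hP.choose, hP.choose_spec.1⟩,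
    fun P hP => hP.choose_spec.2.1, hcov, hdisj⟩

end NetLemmas2
/-- a uniform net-content lower bound over generalised cubes gives
`N^f(A ∩ U) = N^f(U)` for every non-empty open `U`. -/
theorem stmt7 {X : Type*} [MetricSpace X] [CompactSpace X]
    [MeasurableSpace X] [BorelSpace X]
    (C : CubeSystem X) (f : ℝ → ℝ) (hf : DimFunc f)
    (A : Set X) (hA : MeasurableSet A) (c : ℝ) (hc : 0 < c)
    (h : ∀ q : Set X, C.IsCube q →
      ENNReal.ofReal c * netCont C f q < netCont C f (A ∩ q)) :
    ∀ U : Set X, IsOpen U → U.Nonempty → netCont C f (A ∩ U) = netCont C f U := by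
  classical
  intro U hUo hUne
  haveI : Nonempty X := ⟨hUne.choose⟩
  refine le_antisymm (netCont_mono Set.inter_subset_right) ?_
  refine le_iInf fun Q => le_iInf fun hQ => le_iInf fun hcov => ?_
  by_cases hUniv : U = univ
  · subst hUniv
    obtain ⟨nP, hP⟩ := C.isCube_univ
    exact cube_bound hf hc h hP Q hQ (by rwa [Set.inter_univ] at hcov ⊢)
  · obtain ⟨𝒬, h𝒬c, h𝒬cube, h𝒬subU, h𝒬cov, h𝒬disj⟩ := open_decomp C hUo hUne hUniv
    haveI := h𝒬c.to_subtype
    set a : ℕ → ℝ≥0∞ := fun i => ENNReal.ofReal (f (diam (Q i))) with ha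
    set J₂ : Set (Set X) := {P | P ∈ 𝒬 ∧ ∀ i, ¬ P ⊆ Q i} with hJ₂
    set Out : Set ℕ := {i | ∀ P ∈ 𝒬, ¬ (Q i ⊆ P ∧ Q i ≠ P)} with hOut
    have hJ₂count : J₂.Countable := h𝒬c.mono fun P hP => hP.1
    haveI := hJ₂count.to_subtype
    have hcov2 : U ⊆ (⋃ i : ↥Out, Q ↑i) ∪ ⋃ P : ↥J₂, (P : Set X) := by
      intro x hx
      obtain ⟨P, hP𝒬, hxP⟩ := h𝒬cov hx
      by_cases hPJ : ∀ i, ¬ P ⊆ Q i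
      · exact Or.inr (Set.mem_iUnion.mpr ⟨⟨P, hP𝒬, hPJ⟩, hxP⟩)
      · push_neg at hPJ
        obtain ⟨i, hPQi⟩ := hPJ
        have hiOut : i ∈ Out := by
          rintro P' hP' ⟨hsub, hne'⟩
          have hPP' : ¬ Disjoint P P' :=
            Set.not_disjoint_iff.mpr ⟨x, hxP, hsub (hPQi hxP)⟩
          have heq := h𝒬disj.elim hP𝒬 hP' hPP'
          exact hne' (subset_antisymm hsub (heq ▸ hPQi))
        exact Or.inl (Set.mem_iUnion.mpr ⟨⟨i, hiOut⟩, hPQi hxP⟩)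
    refine le_trans (le_trans (netCont_mono hcov2) (netCont_union_le hf _ _)) ?_
    have part1 : netCont C f (⋃ i : ↥Out, Q ↑i) ≤ ∑' i : ↥Out, a ↑i :=
      le_trans (netCont_iUnion_le hf (fun i : ↥Out => Q ↑i))
        (ENNReal.tsum_le_tsum fun i => netCont_cube_le hf (hQ ↑i))
    have part2 : netCont C f (⋃ P : ↥J₂, (P : Set X)) ≤
        ∑' P : ↥J₂, ∑' i, Set.indicator {i | Q i ⊆ (P : Set X)} a i := by
      refine le_trans (netCont_iUnion_le hf (fun P : ↥J₂ => (P : Set X)))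
        (ENNReal.tsum_le_tsum fun P => ?_)
      obtain ⟨hP𝒬, hPnotin⟩ := P.2
      obtain ⟨nP, hPn⟩ := h𝒬cube _ hP𝒬
      have hcovP : A ∩ (P : Set X) ⊆ ⋃ i : {i | Q i ⊆ (P : Set X)}, Q ↑i := by
        rintro y ⟨hyA, hyP⟩
        obtain ⟨i, hyi⟩ := Set.mem_iUnion.mp (hcov ⟨hyA, h𝒬subU _ hP𝒬 hyP⟩)
        obtain ⟨mi, hmi⟩ := hQ i
        rcases le_total mi nP with hle | hle
        · rcases C.nested hle (P : Set X) hPn (Q i) hmi with hsub | hdis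
          · exact absurd hsub (hPnotin i)
          · exact (Set.disjoint_left.mp hdis hyP hyi).elim
        · rcases C.nested hle (Q i) hmi (P : Set X) hPn with hsub | hdis
          · exact Set.mem_iUnion.mpr ⟨⟨i, hsub⟩, hyi⟩
          · exact (Set.disjoint_left.mp hdis hyi hyP).elim
      have hcb := cube_bound hf hc h hPn (fun i : {i | Q i ⊆ (P : Set X)} => Q ↑i)
        (fun i => hQ ↑i) hcovP
      rw [← tsum_subtype ({i | Q i ⊆ (P : Set X)}) a]
      exact hcb
    refine le_trans (add_le_add part1 part2) ?_
    have hswap : (∑' P : ↥J₂, ∑' i, Set.indicator {i | Q i ⊆ (P : Set X)} a i)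
        = ∑' i, ∑' P : ↥J₂, Set.indicator {i | Q i ⊆ (P : Set X)} a i :=
      ENNReal.tsum_comm
    rw [tsum_subtype Out a, hswap, ← ENNReal.tsum_add]
    refine ENNReal.tsum_le_tsum fun i => ?_
    by_cases hiO : i ∈ Out
    · rw [Set.indicator_of_mem hiO]
      have hz : (∑' P : ↥J₂, Set.indicator {i | Q i ⊆ (P : Set X)} a i) = 0 := by
        refine ENNReal.tsum_eq_zero.mpr fun P => Set.indicator_of_notMem ?_ _
        intro hsub
        have hQiP : Q i ≠ (P : Set X) := by
          intro heq
          exact P.2.2 i (heq ▸ subset_rfl)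
        exact hiO ↑P P.2.1 ⟨hsub, hQiP⟩
      rw [hz, add_zero]
    · rw [Set.indicator_of_notMem hiO, zero_add]
      by_cases hex : ∃ P : ↥J₂, Q i ⊆ (P : Set X)
      · obtain ⟨P₀, hP₀⟩ := hex
        rw [tsum_eq_single P₀ ?_]
        · rw [Set.indicator_of_mem (show i ∈ {j | Q j ⊆ (P₀ : Set X)} from hP₀) a]
        · intro P hP
          refine Set.indicator_of_notMem (fun hsub => ?_) _
          have hQne := CubeSystem.isCube_nonempty (hQ i)
          have hnd : ¬ Disjoint (P : Set X) (P₀ : Set X) :=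
            Set.not_disjoint_iff.mpr
              ⟨hQne.choose, hsub hQne.choose_spec, hP₀ hQne.choose_spec⟩
          exact hP (Subtype.ext (h𝒬disj.elim P.2.1 P₀.2.1 hnd))
      · push_neg at hex
        rw [ENNReal.tsum_eq_zero.mpr fun P : ↥J₂ => Set.indicator_of_notMem (show i ∉ {j | Q j ⊆ (P : Set X)} from hex P) a]
        exact zero_le
end

section
/- Let X be a compact metric space supporting a g-Ahlfors regular measure H^g (g doubling), with generalised dyadic cubes Q. Let A ⊆ X be Borel. If there exists c > 0 such that H^g(A ∩ Q) > c·H^g(Q) for every generalised cube Q, then H^g(A) = H^g(X). -/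
open Metric Set ENNReal Filter MeasureTheory

section Aux

open MeasureTheory OuterMeasure

variable {Y : Type*} [MetricSpace Y]

open scoped Classical in
/-- The gauge used to realise `hMeas` as a mathlib metric outer measure. -/
noncomputable def ballGauge (g : ℝ → ℝ) : Set Y → ℝ≥0∞ :=
  fun s => if (∃ x : Y, ∃ r : ℝ, s = ball x r) then ENNReal.ofReal (g (diam s)) else ∞

variable [CompactSpace Y]

lemma ediam_ne_top' (s : Set Y) : EMetric.diam s ≠ ⊤ :=
  (isBounded_of_compactSpace.subset (subset_univ s)).ediam_ne_top

lemma diam_le_iff' {s : Set Y} {η : ℝ} (hη : 0 ≤ η) :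
    diam s ≤ η ↔ EMetric.diam s ≤ ENNReal.ofReal η :=
  (ENNReal.le_ofReal_iff_toReal_le (ediam_ne_top' s) hη).symm

lemma hMeasAux_eq_pre [Nonempty Y] {g : ℝ → ℝ} (hg0 : g 0 = 0) {η : ℝ} (hη : 0 < η)
    (A : Set Y) :
    hMeasAux g η A = OuterMeasure.mkMetric'.pre (ballGauge g) (ENNReal.ofReal η) A := by
  classical
  apply le_antisymm
  · show hMeasAux g η A ≤
      boundedBy (extend fun s (_ : EMetric.diam s ≤ ENNReal.ofReal η) => ballGauge g s) A
    rw [OuterMeasure.boundedBy_apply]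
    refine le_iInf₂ fun t ht => ?_
    by_cases hgood : ∀ n, (t n).Nonempty →
        EMetric.diam (t n) ≤ ENNReal.ofReal η ∧ (∃ x : Y, ∃ r : ℝ, t n = ball x r)
    · obtain ⟨x₀⟩ := ‹Nonempty Y›
      set U : ℕ → Set Y := fun n => if (t n).Nonempty then t n else ball x₀ 0 with hU
      have hball : IsBallFamily U := fun n => by
        by_cases hn : (t n).Nonempty
        · simpa [U, hn] using (hgood n hn).2
        · exact ⟨x₀, 0, by simp [U, hn]⟩
      have hcov : A ⊆ ⋃ n, U n := by
        refine ht.trans (iUnion_mono fun n => ?_)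
        by_cases hn : (t n).Nonempty
        · simp [U, hn]
        · simp [U, hn, not_nonempty_iff_eq_empty.1 hn]
      have hdiam : ∀ n, diam (U n) ≤ η := by
        intro n
        by_cases hn : (t n).Nonempty
        · exact (diam_le_iff' hη.le).2 (by simpa [U, hn] using (hgood n hn).1)
        · simp only [U, hn, if_false]
          rw [ball_zero, diam_empty]; exact hη.le
      refine le_trans (iInf_le_of_le U (iInf_le_of_le hball (iInf_le_of_le hcov
        (iInf_le_of_le hdiam le_rfl)))) ?_
      refine ENNReal.tsum_le_tsum fun n => ?_
      by_cases hn : (t n).Nonempty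
      · rw [iSup_pos hn, extend_eq (fun s (_ : EMetric.diam s ≤ ENNReal.ofReal η) => ballGauge g s) (hgood n hn).1]
        simp only [ballGauge, if_pos (hgood n hn).2, U, hn, if_true]
        exact le_rfl
      · simp only [U, hn, if_false]
        rw [ball_zero, diam_empty, hg0, ENNReal.ofReal_zero]
        exact zero_le
    · push_neg at hgood
      obtain ⟨n, hn, hbad⟩ := hgood
      have htop : (⨆ _ : (t n).Nonempty,
          extend (fun s (_ : EMetric.diam s ≤ ENNReal.ofReal η) => ballGauge g s) (t n)) = ∞ := by
        rw [iSup_pos hn]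
        by_cases hd : EMetric.diam (t n) ≤ ENNReal.ofReal η
        · rw [extend_eq (fun s (_ : EMetric.diam s ≤ ENNReal.ofReal η) => ballGauge g s) hd]
          have hnb : ¬ ∃ x : Y, ∃ r : ℝ, t n = ball x r := by
            push_neg; exact hbad hd
          simp only [ballGauge, if_neg hnb]
        · exact extend_eq_top (fun s (_ : EMetric.diam s ≤ ENNReal.ofReal η) => ballGauge g s) hd
      exact le_top.trans (htop ▸ ENNReal.le_tsum n)
  · refine le_iInf fun U => le_iInf fun hball => le_iInf fun hcov => le_iInf fun hdiam => ?_
    show boundedBy (extend fun s (_ : EMetric.diam s ≤ ENNReal.ofReal η) => ballGauge g s) A ≤ _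
    rw [OuterMeasure.boundedBy_apply]
    refine iInf₂_le_of_le U hcov ?_
    refine ENNReal.tsum_le_tsum fun n => ?_
    refine iSup_le fun _ => ?_
    rw [extend_eq (fun s (_ : EMetric.diam s ≤ ENNReal.ofReal η) => ballGauge g s) ((diam_le_iff' hη.le).1 (hdiam n))]
    simp only [ballGauge, if_pos (hball n)]
    exact le_rfl

lemma hMeas_eq_mkMetric' [Nonempty Y] {g : ℝ → ℝ} (hg0 : g 0 = 0) (A : Set Y) :
    hMeas g A = OuterMeasure.mkMetric' (ballGauge g) A := by
  have hrw : OuterMeasure.mkMetric' (ballGauge g) A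
      = ⨆ (r : ℝ≥0∞) (_ : 0 < r), OuterMeasure.mkMetric'.pre (ballGauge g) r A := by
    simp [OuterMeasure.mkMetric', OuterMeasure.iSup_apply]
  rw [hrw]
  show (⨆ (η : ℝ) (_ : 0 < η), hMeasAux g η A) = _
  apply le_antisymm
  · refine iSup₂_le fun η hη => ?_
    rw [hMeasAux_eq_pre hg0 hη]
    exact le_iSup₂ (α := ℝ≥0∞) (ENNReal.ofReal η) (ENNReal.ofReal_pos.2 hη)
  · refine iSup₂_le fun r hr => ?_
    obtain ⟨η, hη, hle⟩ : ∃ η : ℝ, 0 < η ∧ ENNReal.ofReal η ≤ r := by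
      rcases eq_or_ne r ⊤ with rfl | hr'
      · exact ⟨1, one_pos, le_top⟩
      · exact ⟨r.toReal, ENNReal.toReal_pos hr.ne' hr',
          le_of_eq (ENNReal.ofReal_toReal hr')⟩
    calc OuterMeasure.mkMetric'.pre (ballGauge g) r A
        ≤ OuterMeasure.mkMetric'.pre (ballGauge g) (ENNReal.ofReal η) A :=
          OuterMeasure.mkMetric'.mono_pre _ hle A
      _ = hMeasAux g η A := (hMeasAux_eq_pre hg0 hη A).symm
      _ ≤ _ := le_iSup₂ (α := ℝ≥0∞) η hη

lemma doubling_iter {g : ℝ → ℝ} {D : ℝ} (hD : 1 < D) (hgD : DoublingWith g D)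
    (k : ℕ) {s : ℝ} (hs : 0 < s) : g (2 ^ k * s) ≤ D ^ k * g s := by
  induction k with
  | zero => simp
  | succ k ih =>
      have h2 : (2:ℝ) ^ (k+1) * s = 2 * (2 ^ k * s) := by ring
      have hpos : 0 < (2:ℝ) ^ k * s := by positivity
      calc g (2 ^ (k+1) * s) = g (2 * (2 ^ k * s)) := by rw [h2]
        _ ≤ D * g (2 ^ k * s) := (hgD _ hpos).le
        _ ≤ D * (D ^ k * g s) := by
            exact mul_le_mul_of_nonneg_left ih (by linarith)
        _ = D ^ (k+1) * g s := by ring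

end Aux

/-- on a compact `g`-Ahlfors regular space, a uniform `H^g`-density lower
bound `H^g(A ∩ Q) > c·H^g(Q)` over all generalised cubes forces `H^g(A) = H^g(X)`. -/
theorem stmt9 {X : Type*} [MetricSpace X] [CompactSpace X]
    [MeasurableSpace X] [BorelSpace X]
    (g : ℝ → ℝ) (D : ℝ) (hg : DimFunc g) (hD : 1 < D) (hgD : DoublingWith g D)
    (hAh : Ahlfors g X) (C : CubeSystem X)
    (A : Set X) (hA : MeasurableSet A) (c : ℝ) (hc : 0 < c)
    (h : ∀ q : Set X, C.IsCube q →
      ENNReal.ofReal c * hMeas g q < hMeas g (A ∩ q)) :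
    hMeas g A = hMeas g (univ : Set X) := by
  classical
  rcases isEmpty_or_nonempty X with hX | hX
  · have : A = univ := Subsingleton.elim _ _
    rw [this]
  obtain ⟨c₁, c₂, hc₁, hc₂, hAW⟩ := hAh
  have hg0 : g 0 = 0 := hg.map_zero
  set OM := OuterMeasure.mkMetric' (ballGauge (Y := X) g) with hOM
  have hEq : ∀ s : Set X, hMeas g s = OM s := fun s => hMeas_eq_mkMetric' hg0 s
  have hMono : ∀ {s t : Set X}, s ⊆ t → hMeas g s ≤ hMeas g t := by
    intro s t hst; rw [hEq, hEq]; exact measure_mono hst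
  set ν : Measure X := OM.toMeasure ((OuterMeasure.mkMetric'_isMetric _).le_caratheodory) with hν
  have hνeq : ∀ {s : Set X}, MeasurableSet s → ν s = hMeas g s := by
    intro s hs
    rw [hν, toMeasure_apply _ _ hs, hEq]
  have hD0 : (0:ℝ) < D := lt_trans one_pos hD
  -- finite measure
  obtain ⟨x₀⟩ := hX
  have hUnivBall : (univ : Set X) = ball x₀ (diam (univ : Set X) + 1) := by
    refine (eq_univ_of_forall fun y => ?_).symm
    have := dist_le_diam_of_mem (isBounded_of_compactSpace) (mem_univ y) (mem_univ x₀)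
    exact mem_ball.2 (lt_of_le_of_lt this (lt_add_one _))
  have hRpos : 0 < diam (univ : Set X) + 1 := by
    have := diam_nonneg (s := (univ : Set X)); linarith
  have hνFin : IsFiniteMeasure ν := by
    constructor
    rw [hνeq MeasurableSet.univ]
    calc hMeas g univ = hMeas g (ball x₀ (diam (univ : Set X) + 1)) := by rw [← hUnivBall]
      _ ≤ ENNReal.ofReal (c₂ * g (diam (univ : Set X) + 1)) := (hAW x₀ _ hRpos).2
      _ < ⊤ := ENNReal.ofReal_lt_top
  haveI := hνFin
  -- doubling
  haveI hνDoub : IsUnifLocDoublingMeasure ν := by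
    constructor
    refine ⟨Real.toNNReal (c₂ * D ^ 2 / c₁), ?_⟩
    filter_upwards [self_mem_nhdsWithin] with ε (hε : ε ∈ Ioi (0:ℝ))
    intro x
    have hε0 : (0:ℝ) < ε := hε
    have hb1 : ν (closedBall x (2 * ε)) ≤ ENNReal.ofReal (c₂ * (D ^ 2 * g ε)) := by
      have hsub : closedBall x (2 * ε) ⊆ ball x (4 * ε) :=
        closedBall_subset_ball (by linarith)
      have h4 : (4:ℝ) * ε = 2 ^ 2 * ε := by ring
      calc ν (closedBall x (2 * ε)) ≤ ν (ball x (4 * ε)) := measure_mono hsub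
        _ = hMeas g (ball x (4 * ε)) := hνeq measurableSet_ball
        _ ≤ ENNReal.ofReal (c₂ * g (4 * ε)) := (hAW x _ (by linarith)).2
        _ ≤ ENNReal.ofReal (c₂ * (D ^ 2 * g ε)) := by
            refine ENNReal.ofReal_le_ofReal ?_
            have := doubling_iter hD hgD 2 hε0
            rw [h4]
            nlinarith [this, hc₂.le]
    have hb2 : ENNReal.ofReal (c₂ * (D ^ 2 * g ε))
        ≤ (Real.toNNReal (c₂ * D ^ 2 / c₁) : ℝ≥0∞) * ν (closedBall x ε) := by
      have hball : ENNReal.ofReal (c₁ * g ε) ≤ ν (closedBall x ε) := by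
        calc ENNReal.ofReal (c₁ * g ε) ≤ hMeas g (ball x ε) := (hAW x ε hε0).1
          _ = ν (ball x ε) := (hνeq measurableSet_ball).symm
          _ ≤ ν (closedBall x ε) := measure_mono ball_subset_closedBall
      have hC : (Real.toNNReal (c₂ * D ^ 2 / c₁) : ℝ≥0∞) = ENNReal.ofReal (c₂ * D ^ 2 / c₁) :=
        rfl
      calc ENNReal.ofReal (c₂ * (D ^ 2 * g ε))
          = ENNReal.ofReal (c₂ * D ^ 2 / c₁) * ENNReal.ofReal (c₁ * g ε) := by
            rw [← ENNReal.ofReal_mul (by positivity)]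
            congr 1
            field_simp
        _ ≤ (Real.toNNReal (c₂ * D ^ 2 / c₁) : ℝ≥0∞) * ν (closedBall x ε) := by
            rw [hC]; exact mul_le_mul_right hball _
    exact hb1.trans hb2
  -- null complement
  have hB0 : ν Aᶜ = 0 := by
    by_contra hB0
    have hrne : ν.restrict Aᶜ ≠ 0 := by
      rw [Ne, Measure.restrict_eq_zero]; exact hB0
    haveI : NeBot (ae (ν.restrict Aᶜ)) := ae_neBot.2 hrne
    have hae1 := IsUnifLocDoublingMeasure.ae_tendsto_measure_inter_div ν Aᶜ 1
    have hae2 : ∀ᵐ x ∂ν.restrict Aᶜ, x ∈ Aᶜ := ae_restrict_mem hA.compl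
    obtain ⟨x, hx, hxA⟩ := (hae1.and hae2).exists
    -- cubes containing x
    have hcube : ∀ n : ℕ, ∃ q, q ∈ C.cubes (n : ℤ) ∧ x ∈ q := by
      intro n
      have : x ∈ ⋃₀ C.cubes (n : ℤ) := by rw [C.cover]; exact mem_univ x
      obtain ⟨q, hq, hxq⟩ := this
      exact ⟨q, hq, hxq⟩
    choose q hq hxq using hcube
    have hcomp : ∀ n : ℕ, ∃ y : X,
        ball y ((4:ℝ) ^ (-(n:ℤ) - 2)) ⊆ q n ∧ q n ⊆ ball y ((4:ℝ) ^ (-(n:ℤ) + 1)) :=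
      fun n => C.comparable _ _ (hq n)
    choose y hy1 hy2 using hcomp
    set δ : ℕ → ℝ := fun n => (4:ℝ) ^ (-(n:ℤ) + 1) with hδ
    have hδpos : ∀ n, 0 < δ n := fun n => zpow_pos (by norm_num) _
    have hδlim : Tendsto δ atTop (nhdsWithin 0 (Ioi (0:ℝ))) := by
      apply tendsto_nhdsWithin_of_tendsto_nhds_of_eventually_within
      · have hrw : δ = fun n : ℕ => 4 * (1/4 : ℝ) ^ n := by
          funext n
          simp only [hδ]
          rw [zpow_add₀ (by norm_num : (4:ℝ) ≠ 0), zpow_neg, zpow_natCast, zpow_one]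
          rw [div_pow, one_pow]
          ring
        rw [hrw]
        have : Tendsto (fun n : ℕ => (1/4 : ℝ) ^ n) atTop (nhds 0) :=
          tendsto_pow_atTop_nhds_zero_of_lt_one (by norm_num) (by norm_num)
        simpa using this.const_mul 4
      · exact Filter.Eventually.of_forall fun n => hδpos n
    have hxmem : ∀ n, x ∈ closedBall (y n) (1 * δ n) := by
      intro n
      rw [one_mul]
      exact ball_subset_closedBall (hy2 n (hxq n))
    have hlim := hx y δ hδlim (Filter.Eventually.of_forall hxmem)
    -- ratio bounds
    set ε : ℝ := min (c * c₁ / (c₂ * D ^ 7)) (1/2) with hε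
    have hD7 : (0:ℝ) < D ^ 7 := by positivity
    have hεpos : 0 < ε := lt_min (by positivity) (by norm_num)
    have hεE : ENNReal.ofReal ε ≠ 0 := (ENNReal.ofReal_pos.2 hεpos).ne'
    have hkey : ∀ n : ℕ, ν (Aᶜ ∩ closedBall (y n) (δ n)) / ν (closedBall (y n) (δ n))
        ≤ 1 - ENNReal.ofReal ε := by
      intro n
      set Gn : ℝ := g ((4:ℝ) ^ (-(n:ℤ) - 2)) with hGn
      have hr2pos : (0:ℝ) < (4:ℝ) ^ (-(n:ℤ) - 2) := zpow_pos (by norm_num) _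
      have hGnpos : 0 < Gn := hg.pos _ hr2pos
      set cB : Set X := closedBall (y n) (δ n) with hcB
      have hnum : ENNReal.ofReal (c * (c₁ * Gn)) ≤ ν (A ∩ cB) := by
        have hmeas : MeasurableSet (A ∩ cB) := hA.inter measurableSet_closedBall
        have hsub : A ∩ q n ⊆ A ∩ cB :=
          inter_subset_inter_right _ ((hy2 n).trans ball_subset_closedBall)
        calc ENNReal.ofReal (c * (c₁ * Gn))
            = ENNReal.ofReal c * ENNReal.ofReal (c₁ * Gn) :=
              ENNReal.ofReal_mul hc.le
          _ ≤ ENNReal.ofReal c * hMeas g (ball (y n) ((4:ℝ) ^ (-(n:ℤ) - 2))) :=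
              mul_le_mul_right (hAW (y n) _ hr2pos).1 _
          _ ≤ ENNReal.ofReal c * hMeas g (q n) :=
              mul_le_mul_right (hMono (hy1 n)) _
          _ ≤ hMeas g (A ∩ q n) := (h (q n) ⟨n, hq n⟩).le
          _ ≤ hMeas g (A ∩ cB) := hMono hsub
          _ = ν (A ∩ cB) := (hνeq hmeas).symm
      have hden : ν cB ≤ ENNReal.ofReal (c₂ * (D ^ 7 * Gn)) := by
        have hsub : cB ⊆ ball (y n) (2 * δ n) :=
          closedBall_subset_ball (by have := hδpos n; linarith)
        have h128 : (2:ℝ) * δ n = 2 ^ 7 * (4:ℝ) ^ (-(n:ℤ) - 2) := by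
          simp only [hδ]
          have : (-(n:ℤ) + 1) = (-(n:ℤ) - 2) + 3 := by ring
          rw [this, zpow_add₀ (by norm_num : (4:ℝ) ≠ 0)]
          norm_num
          ring
        calc ν cB ≤ ν (ball (y n) (2 * δ n)) := measure_mono hsub
          _ = hMeas g (ball (y n) (2 * δ n)) := hνeq measurableSet_ball
          _ ≤ ENNReal.ofReal (c₂ * g (2 * δ n)) :=
              (hAW (y n) _ (by have := hδpos n; linarith)).2
          _ ≤ ENNReal.ofReal (c₂ * (D ^ 7 * Gn)) := by
              refine ENNReal.ofReal_le_ofReal ?_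
              have := doubling_iter hD hgD 7 hr2pos
              rw [h128]
              nlinarith [this, hc₂.le]
      have hcBpos : ν cB ≠ 0 := by
        have hball : ENNReal.ofReal (c₁ * g (δ n)) ≤ ν cB := by
          calc ENNReal.ofReal (c₁ * g (δ n)) ≤ hMeas g (ball (y n) (δ n)) :=
              (hAW (y n) _ (hδpos n)).1
            _ = ν (ball (y n) (δ n)) := (hνeq measurableSet_ball).symm
            _ ≤ ν cB := measure_mono ball_subset_closedBall
        have : (0:ℝ≥0∞) < ENNReal.ofReal (c₁ * g (δ n)) :=
          ENNReal.ofReal_pos.2 (by have := hg.pos _ (hδpos n); positivity)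
        exact (lt_of_lt_of_le this hball).ne'
      have hcBfin : ν cB ≠ ⊤ := (measure_lt_top ν cB).ne
      -- a_n lower bound
      have ha : ENNReal.ofReal ε ≤ ν (A ∩ cB) / ν cB := by
        have hdiv : ENNReal.ofReal (c * (c₁ * Gn)) / ENNReal.ofReal (c₂ * (D ^ 7 * Gn))
            ≤ ν (A ∩ cB) / ν cB := ENNReal.div_le_div hnum hden
        refine le_trans ?_ hdiv
        rw [← ENNReal.ofReal_div_of_pos (by positivity)]
        refine ENNReal.ofReal_le_ofReal ?_
        have heqd : c * (c₁ * Gn) / (c₂ * (D ^ 7 * Gn)) = c * c₁ / (c₂ * D ^ 7) := by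
          field_simp
        rw [heqd]
        exact min_le_left _ _
      -- additivity
      have hadd : ν (A ∩ cB) + ν (Aᶜ ∩ cB) = ν cB := by
        have h1 : A ∩ cB = cB ∩ A := inter_comm _ _
        have h2 : Aᶜ ∩ cB = cB \ A := by rw [inter_comm, diff_eq]
        rw [h1, h2]
        exact measure_inter_add_diff cB hA
      have hsum : ν (A ∩ cB) / ν cB + ν (Aᶜ ∩ cB) / ν cB = 1 := by
        rw [ENNReal.div_add_div_same, hadd, ENNReal.div_self hcBpos hcBfin]
      have : ENNReal.ofReal ε + ν (Aᶜ ∩ cB) / ν cB ≤ 1 := by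
        rw [← hsum]
        exact add_le_add_left ha _
      exact ENNReal.le_sub_of_add_le_left ENNReal.ofReal_ne_top this
    have hle : (1:ℝ≥0∞) ≤ 1 - ENNReal.ofReal ε := le_of_tendsto' hlim hkey
    have hlt : (1:ℝ≥0∞) - ENNReal.ofReal ε < 1 :=
      ENNReal.sub_lt_self ENNReal.one_ne_top one_ne_zero hεE
    exact absurd (lt_of_le_of_lt hle hlt) (lt_irrefl _)
  -- conclude
  have h1 : ν A + ν Aᶜ = ν univ := measure_add_measure_compl hA
  rw [hB0, add_zero] at h1
  rw [← hνeq hA, ← hνeq MeasurableSet.univ, h1]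
end

section
/- (Frostman-type lemma via weighted content.) Let X be a compact metric space and f a dimension function. For 0 < η ≤ ∞, define the weighted Hausdorff pre-measure λ^f_η(X) = inf ∑_i c_i f(|A_i|), the infimum over countable families {(A_i, c_i)} with c_i > 0, |A_i| ≤ η, and χ_X ≤ ∑ c_i χ_{A_i}. Then there exists a Borel measure μ on X with μ(X) = λ^f_η(X) and μ(A) ≤ f(|A|) for every set A ⊆ X with |A| < η. -/
open Metric Set ENNReal Filter MeasureTheory

open NNReal

set_option linter.unusedSectionVars false

section WP
variable {X : Type*} [MetricSpace X] [CompactSpace X]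

/-- weighted content of a (continuous) function. -/
noncomputable def wP (f : ℝ → ℝ) (η : ℝ≥0∞) (g : C(X, ℝ)) : ℝ≥0∞ :=
  ⨅ (S : ℕ → Set X) (c : ℕ → ℝ≥0∞)
    (_ : ∀ i, 0 < c i ∧ c i < ⊤)
    (_ : ∀ i, EMetric.diam (S i) ≤ η)
    (_ : ∀ x, ENNReal.ofReal (g x) ≤ ∑' i, (S i).indicator (fun _ => c i) x),
    ∑' i, c i * ENNReal.ofReal (f (Metric.diam (S i)))

variable {f : ℝ → ℝ} {η : ℝ≥0∞} {g h : C(X, ℝ)}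

lemma wP_le (S : ℕ → Set X) (c : ℕ → ℝ≥0∞) (h1 : ∀ i, 0 < c i ∧ c i < ⊤)
    (h2 : ∀ i, EMetric.diam (S i) ≤ η)
    (h3 : ∀ x, ENNReal.ofReal (g x) ≤ ∑' i, (S i).indicator (fun _ => c i) x) :
    wP f η g ≤ ∑' i, c i * ENNReal.ofReal (f (Metric.diam (S i))) := by
  exact iInf_le_of_le S <| iInf_le_of_le c <| iInf_le_of_le h1 <| iInf_le_of_le h2 <|
    iInf_le_of_le h3 le_rfl

lemma wP_nonpos (hg : ∀ x, g x ≤ 0) (hf0 : f 0 = 0) : wP f η g = 0 := by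
  refine le_antisymm ?_ zero_le
  have := wP_le (f := f) (η := η) (g := g) (fun _ => (∅ : Set X)) (fun _ => 1)
    (fun i => ⟨zero_lt_one, one_lt_top⟩)
    (fun i => by simp [EMetric.diam]) (fun x => by simp [ENNReal.ofReal_eq_zero.2 (hg x)])
  simpa [hf0] using this

lemma wP_mono (hgh : ∀ x, g x ≤ h x) : wP f η g ≤ wP f η h := by
  refine le_iInf fun S => le_iInf fun c => le_iInf fun h1 => le_iInf fun h2 => le_iInf fun h3 => ?_
  exact wP_le S c h1 h2 fun x => le_trans (ENNReal.ofReal_le_ofReal (hgh x)) (h3 x)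

lemma wP_single {U : Set X} (hU : EMetric.diam U ≤ η) (hg1 : ∀ x, g x ≤ 1)
    (hg0 : ∀ x ∉ U, g x ≤ 0) (hf0 : f 0 = 0) :
    wP f η g ≤ ENNReal.ofReal (f (Metric.diam U)) := by
  have := wP_le (f := f) (η := η) (g := g) (fun i => if i = 0 then U else ∅) (fun _ => 1)
    (fun i => ⟨zero_lt_one, one_lt_top⟩)
    (fun i => by by_cases hi : i = 0 <;> simp [hi, hU] <;> simp [EMetric.diam])
    (fun x => by
      by_cases hx : x ∈ U
      · refine le_trans ?_ (ENNReal.le_tsum 0)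
        simp [hx, ENNReal.ofReal_le_one.2 (hg1 x)]
      · simp [ENNReal.ofReal_eq_zero.2 (hg0 x hx)])
  refine le_trans this (le_of_eq ?_)
  rw [tsum_eq_single 0]
  · simp
  · intro i hi; simp [hi, hf0]

lemma wP_lt_top (hη : 0 < η) (hf0 : f 0 = 0) : wP f η g < ⊤ := by
  obtain ⟨r, hr, hrη⟩ : ∃ r : ℝ, 0 < r ∧ ENNReal.ofReal (2 * r) ≤ η := by
    rcases eq_or_ne η ⊤ with rfl | hη'
    · exact ⟨1, one_pos, le_top⟩
    · have h4 : 0 < η.toReal := ENNReal.toReal_pos hη.ne' hη'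
      refine ⟨η.toReal / 4, by linarith, ?_⟩
      rw [ENNReal.ofReal_le_iff_le_toReal hη']
      linarith
  -- finite cover of X by balls of radius r/2
  have hcov : (univ : Set X) ⊆ ⋃ x : X, ball x (r / 2) := by
    intro x _; exact mem_iUnion.2 ⟨x, mem_ball_self (half_pos hr)⟩
  obtain ⟨t, ht⟩ := isCompact_univ.elim_finite_subcover (fun x : X => ball x (r / 2))
    (fun x => isOpen_ball) hcov
  classical
  set l : List X := t.toList with hl
  set S : ℕ → Set X := fun i => if h : i < l.length then ball (l.get ⟨i, h⟩) (r / 2) else ∅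
    with hS
  set c : ℝ≥0∞ := ENNReal.ofReal ‖g‖ + 1 with hc
  have hball : ∀ (y : X), EMetric.diam (ball y (r / 2)) ≤ η := by
    intro y
    refine le_trans (Metric.ediam_le_of_forall_dist_le (C := 2 * r) ?_) hrη
    intro a ha b hb
    have := dist_triangle a y b
    rw [mem_ball] at ha hb
    rw [dist_comm y b] at this
    linarith [ha, hb]
  have key := wP_le (f := f) (η := η) (g := g) S (fun _ => c)
    (fun i => ⟨lt_of_lt_of_le zero_lt_one le_add_self, by simp [hc]⟩)
    (fun i => by
      by_cases hi : i < l.length <;> simp only [hS, hi, dif_pos, dif_neg, not_false_iff]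
      · exact hball _
      · simp [hi, EMetric.diam])
    (fun x => by
      have hx := ht (mem_univ x)
      simp only [mem_iUnion] at hx
      obtain ⟨y, hyt, hy⟩ := hx
      have : y ∈ l := by simp [hl, hyt]
      obtain ⟨j, hjy⟩ := List.mem_iff_get.1 this
      refine le_trans ?_ (ENNReal.le_tsum j.1)
      have hj : (j.1 : ℕ) < l.length := j.2
      have hxS : x ∈ S j.1 := by
        simp only [hS]
        rw [dif_pos hj]
        have he : l.get ⟨j.1, hj⟩ = y := by rw [← hjy]
        rw [he]; exact hy
      rw [indicator_of_mem hxS]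
      show ENNReal.ofReal (g x) ≤ c
      calc ENNReal.ofReal (g x)
          ≤ ENNReal.ofReal ‖g‖ := ENNReal.ofReal_le_ofReal
            ((le_abs_self _).trans ((Real.norm_eq_abs _).symm.le.trans (g.norm_coe_le_norm x)))
        _ ≤ c := le_self_add)
  refine lt_of_le_of_lt key ?_
  have hzero : ∀ i ∉ Finset.range l.length,
      c * ENNReal.ofReal (f (Metric.diam (S i))) = 0 := by
    intro i hi
    rw [Finset.mem_range, not_lt] at hi
    have : S i = ∅ := by simp [hS, not_lt.2 hi]
    simp [this, hf0]
  rw [tsum_eq_sum hzero]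
  refine ENNReal.sum_lt_top.2 fun i _ => ?_
  exact ENNReal.mul_lt_top (by simp [hc]) ENNReal.ofReal_lt_top



lemma wP_add : wP f η (g + h) ≤ wP f η g + wP f η h := by
  classical
  unfold wP
  simp only [ENNReal.iInf_add, ENNReal.add_iInf]
  refine le_iInf fun S => le_iInf fun c => le_iInf fun hc => le_iInf fun hdS => le_iInf fun hcov =>
    le_iInf fun T => le_iInf fun d => le_iInf fun hd => le_iInf fun hdT => le_iInf fun hcov' => ?_
  set S' : ℕ → Set X := fun i => if Even i then S (i / 2) else T (i / 2) with hS'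
  set c' : ℕ → ℝ≥0∞ := fun i => if Even i then c (i / 2) else d (i / 2) with hc'
  have he : ∀ k : ℕ, Even (2 * k) := fun k => even_two_mul k
  have ho : ∀ k : ℕ, ¬ Even (2 * k + 1) := fun k => by simp [parity_simps]
  have hdiv : ∀ k : ℕ, 2 * k / 2 = k := fun k => by omega
  have hdiv' : ∀ k : ℕ, (2 * k + 1) / 2 = k := fun k => by omega
  have key : ∀ (F : Set X → ℝ≥0∞ → ℝ≥0∞),
      (∑' i, F (S' i) (c' i)) = (∑' i, F (S i) (c i)) + ∑' i, F (T i) (d i) := by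
    intro F
    rw [← tsum_even_add_odd ENNReal.summable ENNReal.summable]
    congr 1
    · exact tsum_congr fun k => by simp [hS', hc', he k, hdiv k]
    · exact tsum_congr fun k => by simp [hS', hc', ho k, hdiv' k]
  refine iInf_le_of_le S' <| iInf_le_of_le c' <| iInf_le_of_le ?_ <| iInf_le_of_le ?_ <|
    iInf_le_of_le ?_ ?_
  · intro i
    by_cases hi : Even i <;> simp only [hc', hi, if_pos, if_neg, not_false_iff]
    exacts [hc _, hd _]
  · intro i
    by_cases hi : Even i <;> simp only [hS', hi, if_pos, if_neg, not_false_iff]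
    exacts [hdS _, hdT _]
  · intro x
    calc ENNReal.ofReal ((g + h) x)
        ≤ ENNReal.ofReal (g x) + ENNReal.ofReal (h x) := by
          simp only [ContinuousMap.add_apply]; exact ENNReal.ofReal_add_le
      _ ≤ (∑' i, (T i).indicator (fun _ => d i) x) + ∑' i, (S i).indicator (fun _ => c i) x :=
          add_le_add (hcov' x) (hcov x)
      _ = (∑' i, (S i).indicator (fun _ => c i) x) + ∑' i, (T i).indicator (fun _ => d i) x :=
          add_comm _ _
      _ = ∑' i, (S' i).indicator (fun _ => c' i) x :=
          (key (fun s a => s.indicator (fun _ => a) x)).symm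
  · exact le_of_eq ((key (fun s a => a * ENNReal.ofReal (f (Metric.diam s)))).trans
      (add_comm _ _))

lemma mul_iInf_aux {a : ℝ} (ha : 0 < a) {ι : Sort*} (F : ι → ℝ≥0∞) :
    (ENNReal.ofReal a * ⨅ i, F i) = ⨅ i, ENNReal.ofReal a * F i :=
  ENNReal.mul_iInf' (fun h => absurd h ENNReal.ofReal_ne_top)
    (fun h => absurd h (ENNReal.ofReal_pos.2 ha).ne')

lemma wP_smul_le {a : ℝ} (ha : 0 < a) : wP f η (a • g) ≤ ENNReal.ofReal a * wP f η g := by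
  unfold wP
  rw [mul_iInf_aux ha]; refine le_iInf fun S => ?_
  rw [mul_iInf_aux ha]; refine le_iInf fun c => ?_
  rw [mul_iInf_aux ha]; refine le_iInf fun hc => ?_
  rw [mul_iInf_aux ha]; refine le_iInf fun hdS => ?_
  rw [mul_iInf_aux ha]; refine le_iInf fun hcov => ?_
  refine iInf_le_of_le S <| iInf_le_of_le (fun i => ENNReal.ofReal a * c i) <|
    iInf_le_of_le ?_ <| iInf_le_of_le hdS <| iInf_le_of_le ?_ ?_
  · exact fun i => ⟨ENNReal.mul_pos (ENNReal.ofReal_pos.2 ha).ne' (hc i).1.ne',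
      ENNReal.mul_lt_top ENNReal.ofReal_lt_top (hc i).2⟩
  · intro x
    have hind : (∑' i, (S i).indicator (fun _ => ENNReal.ofReal a * c i) x)
        = ENNReal.ofReal a * ∑' i, (S i).indicator (fun _ => c i) x := by
      rw [← ENNReal.tsum_mul_left]
      refine tsum_congr fun i => ?_
      by_cases hx : x ∈ S i <;> simp [hx]
    rw [hind]
    calc ENNReal.ofReal ((a • g) x) = ENNReal.ofReal a * ENNReal.ofReal (g x) := by
          simp only [ContinuousMap.smul_apply, smul_eq_mul]
          exact ENNReal.ofReal_mul ha.le
      _ ≤ _ := mul_le_mul_right (hcov x) _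
  · rw [← ENNReal.tsum_mul_left]
    exact le_of_eq (tsum_congr fun i => by ring)

lemma wP_smul {a : ℝ} (ha : 0 < a) : wP f η (a • g) = ENNReal.ofReal a * wP f η g := by
  refine le_antisymm (wP_smul_le ha) ?_
  have h2 := wP_smul_le (f := f) (η := η) (g := a • g) (a := a⁻¹) (inv_pos.2 ha)
  rw [smul_smul, inv_mul_cancel₀ ha.ne', one_smul] at h2
  calc ENNReal.ofReal a * wP f η g
      ≤ ENNReal.ofReal a * (ENNReal.ofReal a⁻¹ * wP f η (a • g)) := mul_le_mul_right h2 _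
    _ = wP f η (a • g) := by
        rw [← mul_assoc, ← ENNReal.ofReal_mul ha.le, mul_inv_cancel₀ ha.ne',
          ENNReal.ofReal_one, one_mul]


lemma wP_one : wP f η (1 : C(X, ℝ)) = wCont f η (univ : Set X) := by
  unfold wP wCont
  simp only [ContinuousMap.one_apply, ENNReal.ofReal_one, mem_univ, true_implies, forall_const]

end WP

set_option maxHeartbeats 1000000 in
/-- Frostman-type lemma via weighted content: there is a Borel measure
`μ` with `μ(X) = λ^f_η(X)` and `μ(A) ≤ f(|A|)` whenever `|A| < η`. -/
theorem stmt10 {X : Type*} [MetricSpace X] [CompactSpace X]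
    [MeasurableSpace X] [BorelSpace X]
    (f : ℝ → ℝ) (hf : DimFunc f) (η : ℝ≥0∞) (hη : 0 < η) :
    ∃ μ : Measure X, μ univ = wCont f η (univ : Set X) ∧
      ∀ A : Set X, EMetric.diam A < η → μ A ≤ ENNReal.ofReal (f (diam A)) := by
  classical
  rcases isEmpty_or_nonempty X with hX | hX
  · refine ⟨0, ?_, fun A _ => by simp⟩
    have h0 : wCont f η (univ : Set X) ≤ 0 := by
      refine iInf_le_of_le (fun _ => (∅ : Set X)) <| iInf_le_of_le (fun _ => 1) <|
        iInf_le_of_le (fun i => ⟨zero_lt_one, ENNReal.one_lt_top⟩) <|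
        iInf_le_of_le (fun i => by simp [EMetric.diam]) <|
        iInf_le_of_le (fun x _ => (IsEmpty.false x).elim) <| le_of_eq (by simp [hf.map_zero])
    simp [le_antisymm h0 zero_le]
  -- the sublinear functional
  set p : C(X, ℝ) → ℝ := fun g => (wP f η g).toReal with hp
  have hfin : ∀ g : C(X, ℝ), wP f η g ≠ ⊤ := fun g => (wP_lt_top hη hf.map_zero).ne
  have hp_add : ∀ g h : C(X, ℝ), p (g + h) ≤ p g + p h := by
    intro g h
    calc (wP f η (g + h)).toReal ≤ (wP f η g + wP f η h).toReal :=
          ENNReal.toReal_mono (by simp [ENNReal.add_ne_top, hfin]) wP_add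
      _ = p g + p h := ENNReal.toReal_add (hfin g) (hfin h)
  have hp_smul : ∀ c : ℝ, 0 < c → ∀ g : C(X, ℝ), p (c • g) = c * p g := by
    intro c hc g
    show (wP f η (c • g)).toReal = _
    rw [wP_smul hc, ENNReal.toReal_mul, ENNReal.toReal_ofReal hc.le]
  have hp_nonneg : ∀ g : C(X, ℝ), 0 ≤ p g := fun g => ENNReal.toReal_nonneg
  have hp_npos : ∀ g : C(X, ℝ), (∀ x, g x ≤ 0) → p g = 0 := fun g hg => by
    show (wP f η g).toReal = 0
    rw [wP_nonpos hg hf.map_zero, ENNReal.toReal_zero]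
  -- Hahn-Banach
  have x₀ : X := Classical.arbitrary X
  have H0 : ∀ c : ℝ, c • (1 : C(X, ℝ)) = 0 → c • p 1 = 0 := by
    intro c hc
    have := DFunLike.congr_fun hc x₀
    simp only [ContinuousMap.smul_apply, ContinuousMap.one_apply, smul_eq_mul, mul_one,
      ContinuousMap.zero_apply] at this
    simp [this]
  obtain ⟨L, hLf, hLle⟩ := exists_extension_of_le_sublinear
    (LinearPMap.mkSpanSingleton' (1 : C(X, ℝ)) (p 1) H0) p
    (fun c hc x => hp_smul c hc x) hp_add (by
    rintro ⟨z, hz⟩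
    rcases Submodule.mem_span_singleton.1 hz with ⟨t, ht⟩
    have hze : (⟨z, hz⟩ : (LinearPMap.mkSpanSingleton' (1 : C(X, ℝ)) (p 1) H0).domain)
        = ⟨t • (1 : C(X, ℝ)), by rw [ht]; exact hz⟩ := Subtype.ext ht.symm
    rw [hze, LinearPMap.mkSpanSingleton'_apply]
    show t * p 1 ≤ p (t • 1)
    rcases lt_trichotomy t 0 with htn | rfl | htp
    · have : 0 ≤ p (t • (1 : C(X, ℝ))) := hp_nonneg _
      nlinarith [hp_nonneg (1 : C(X, ℝ))]
    · simp only [zero_mul, zero_smul]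
      rw [hp_npos 0 (fun x => le_of_eq rfl)]
    · rw [hp_smul t htp])
  have hL1 : L 1 = p 1 := by
    have := hLf ⟨1, Submodule.mem_span_singleton_self _⟩
    exact this.trans (LinearPMap.mkSpanSingleton'_apply_self _ _ _ _)
  have hLpos : ∀ g : C(X, ℝ), (∀ x, 0 ≤ g x) → 0 ≤ L g := by
    intro g hg
    have h1 : L (-g) ≤ p (-g) := hLle (-g)
    rw [hp_npos (-g) (fun x => by simpa using hg x), map_neg] at h1
    linarith
  have hLmono : ∀ g h : C(X, ℝ), (∀ x, g x ≤ h x) → L g ≤ L h := by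
    intro g h hgh
    have := hLpos (h - g) (fun x => by simpa using hgh x)
    rw [map_sub] at this
    linarith
  -- the content
  set T : Set X → Set ℝ := fun K =>
    {y | ∃ g : C(X, ℝ), (∀ x ∈ K, 1 ≤ g x) ∧ (∀ x, 0 ≤ g x) ∧ L g = y} with hT
  have hTne : ∀ K : Set X, (T K).Nonempty := fun K =>
    ⟨L 1, 1, fun x _ => by simp, fun x => by simp, rfl⟩
  have hTbdd : ∀ K : Set X, BddBelow (T K) := fun K =>
    ⟨0, by rintro y ⟨g, _, hg0, rfl⟩; exact hLpos g hg0⟩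
  have hT0 : ∀ K : Set X, 0 ≤ sInf (T K) := fun K =>
    le_csInf (hTne K) (by rintro y ⟨g, _, hg0, rfl⟩; exact hLpos g hg0)
  set κ : TopologicalSpace.Compacts X → ℝ≥0 := fun K => Real.toNNReal (sInf (T K)) with hκ
  have hmono : ∀ K₁ K₂ : TopologicalSpace.Compacts X, (K₁ : Set X) ⊆ K₂ → κ K₁ ≤ κ K₂ := by
    intro K₁ K₂ hsub
    refine Real.toNNReal_le_toNNReal ?_
    refine csInf_le_csInf (hTbdd _) (hTne _) ?_
    rintro y ⟨g, hg1, hg0, rfl⟩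
    exact ⟨g, fun x hx => hg1 x (hsub hx), hg0, rfl⟩
  have hsuple : ∀ K₁ K₂ : TopologicalSpace.Compacts X, κ (K₁ ⊔ K₂) ≤ κ K₁ + κ K₂ := by
    intro K₁ K₂
    have H : ∀ y₁ ∈ T K₁, ∀ y₂ ∈ T K₂, sInf (T ((K₁ ⊔ K₂ : TopologicalSpace.Compacts X) : Set X)) ≤ y₁ + y₂ := by
      rintro y₁ ⟨g₁, hg11, hg10, rfl⟩ y₂ ⟨g₂, hg21, hg20, rfl⟩
      refine csInf_le (hTbdd _) ⟨g₁ + g₂, ?_, fun x => add_nonneg (hg10 x) (hg20 x),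
        map_add L g₁ g₂⟩
      intro x hx
      rcases (by exact_mod_cast hx : x ∈ (K₁ : Set X) ∪ K₂) with hx | hx
      · simpa using le_add_of_le_of_nonneg (hg11 x hx) (hg20 x)
      · simpa using le_add_of_nonneg_of_le (hg10 x) (hg21 x hx)
    have hreal : sInf (T ((K₁ ⊔ K₂ : TopologicalSpace.Compacts X) : Set X)) ≤ sInf (T K₁) + sInf (T K₂) := by
      have h1 : sInf (T ((K₁ ⊔ K₂ : TopologicalSpace.Compacts X) : Set X)) - sInf (T K₂) ≤ sInf (T K₁) := by
        refine le_csInf (hTne _) fun y₁ hy₁ => ?_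
        have h2 : sInf (T ((K₁ ⊔ K₂ : TopologicalSpace.Compacts X) : Set X)) - y₁ ≤ sInf (T K₂) := by
          refine le_csInf (hTne _) fun y₂ hy₂ => ?_
          have := H y₁ hy₁ y₂ hy₂
          linarith
        linarith
      linarith
    calc κ (K₁ ⊔ K₂) ≤ Real.toNNReal (sInf (T K₁) + sInf (T K₂)) :=
          Real.toNNReal_le_toNNReal hreal
      _ = κ K₁ + κ K₂ := by rw [Real.toNNReal_add (hT0 _) (hT0 _)]
  have hsupd : ∀ K₁ K₂ : TopologicalSpace.Compacts X, Disjoint (K₁ : Set X) K₂ →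
      IsClosed (K₁ : Set X) → IsClosed (K₂ : Set X) → κ (K₁ ⊔ K₂) = κ K₁ + κ K₂ := by
    intro K₁ K₂ hdisj h₁ h₂
    refine le_antisymm (hsuple K₁ K₂) ?_
    have hreal : sInf (T K₁) + sInf (T K₂) ≤ sInf (T ((K₁ ⊔ K₂ : TopologicalSpace.Compacts X) : Set X)) := by
      refine le_csInf (hTne _) ?_
      rintro y ⟨g, hg1, hg0, rfl⟩
      obtain ⟨ψ, hψ1, hψ2, hψm⟩ := exists_continuous_zero_one_of_isClosed h₁ h₂ hdisj
      set g₁ : C(X, ℝ) := g * (1 - ψ) with hgdef1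
      set g₂ : C(X, ℝ) := g * ψ with hgdef2
      have e : L g₁ + L g₂ = L g := by
        rw [← map_add]
        congr 1
        ext x
        simp only [hgdef1, hgdef2, ContinuousMap.add_apply, ContinuousMap.mul_apply,
          ContinuousMap.sub_apply, ContinuousMap.one_apply]
        ring
      have m1 : sInf (T K₁) ≤ L g₁ := by
        refine csInf_le (hTbdd _) ⟨g₁, ?_, ?_, rfl⟩
        · intro x hx
          have hψx : ψ x = 0 := hψ1 hx
          have := hg1 x (by exact_mod_cast Or.inl hx)
          simp only [hgdef1, ContinuousMap.mul_apply, ContinuousMap.sub_apply,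
            ContinuousMap.one_apply, hψx]
          linarith
        · intro x
          have := (hψm x).2
          have := (hψm x).1
          simp only [hgdef1, ContinuousMap.mul_apply, ContinuousMap.sub_apply,
            ContinuousMap.one_apply]
          nlinarith [hg0 x]
      have m2 : sInf (T K₂) ≤ L g₂ := by
        refine csInf_le (hTbdd _) ⟨g₂, ?_, ?_, rfl⟩
        · intro x hx
          have hψx : ψ x = 1 := hψ2 hx
          have := hg1 x (by exact_mod_cast Or.inr hx)
          simp only [hgdef2, ContinuousMap.mul_apply, hψx]
          linarith
        · intro x
          exact mul_nonneg (hg0 x) (hψm x).1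
      linarith
    calc κ K₁ + κ K₂ = Real.toNNReal (sInf (T K₁) + sInf (T K₂)) :=
          (Real.toNNReal_add (hT0 _) (hT0 _)).symm
      _ ≤ κ (K₁ ⊔ K₂) := Real.toNNReal_le_toNNReal hreal
  set C : MeasureTheory.Content X := ⟨κ, hmono, hsupd, hsuple⟩ with hC
  have hcoe : ∀ K : TopologicalSpace.Compacts X, (C K : ℝ≥0∞) = ENNReal.ofReal (sInf (T K)) := by
    intro K
    rw [hC]
    show ((κ K : ℝ≥0) : ℝ≥0∞) = _
    rw [hκ]
    rfl
  refine ⟨C.measure, ?_, ?_⟩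
  · -- total mass
    rw [C.measure_apply MeasurableSet.univ, C.outerMeasure_of_isOpen univ isOpen_univ]
    have hKuniv : C.innerContent ⟨univ, isOpen_univ⟩ = (C ⟨univ, isCompact_univ⟩ : ℝ≥0∞) := by
      refine le_antisymm (iSup_le fun K => iSup_le fun _ => ?_) ?_
      · exact C.mono K ⟨univ, isCompact_univ⟩ (subset_univ _)
      · exact le_iSup_of_le ⟨univ, isCompact_univ⟩ (le_iSup_of_le (subset_univ _) le_rfl)
    rw [hKuniv, hcoe]
    simp only [TopologicalSpace.Compacts.coe_mk]
    have hinf : sInf (T (univ : Set X)) = p 1 := by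
      refine le_antisymm ?_ ?_
      · refine csInf_le (hTbdd _) ⟨1, fun x _ => by simp, fun x => by simp, hL1⟩
      · refine le_csInf (hTne _) ?_
        rintro y ⟨g, hg1, hg0, rfl⟩
        refine le_trans (le_of_eq hL1.symm) (hLmono 1 g fun x => ?_)
        simpa using hg1 x (mem_univ x)
    rw [hinf]
    show ENNReal.ofReal ((wP f η (1 : C(X, ℝ))).toReal) = _
    rw [ENNReal.ofReal_toReal (hfin 1), wP_one]
  · -- Frostman bound
    intro A hA
    have hbound : ∀ ε : ℝ, 0 < ε → EMetric.diam (thickening ε A) ≤ η →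
        C.measure A ≤ ENNReal.ofReal (f (diam (thickening ε A))) := by
      intro ε hε hdiamU
      set U := thickening ε A with hU
      have hUopen : IsOpen U := isOpen_thickening
      calc C.measure A ≤ C.measure U := measure_mono (self_subset_thickening hε A)
        _ = C.innerContent ⟨U, hUopen⟩ := by
            rw [C.measure_apply hUopen.measurableSet, C.outerMeasure_of_isOpen U hUopen]
        _ ≤ ENNReal.ofReal (f (diam U)) := by
            refine iSup_le fun K => iSup_le fun hKU => ?_
            obtain ⟨ψ, hψK, hψU, hψm⟩ := exists_continuous_zero_one_of_isClosed
              K.2.isClosed hUopen.isClosed_compl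
              (disjoint_compl_right.mono_left hKU)
            set g : C(X, ℝ) := 1 - ψ with hgdef
            have hg1 : ∀ x ∈ (K : Set X), 1 ≤ g x := fun x hx => by
              simp [hgdef, hψK hx]
            have hg0 : ∀ x, 0 ≤ g x := fun x => by
              simp only [hgdef, ContinuousMap.sub_apply, ContinuousMap.one_apply]
              linarith [(hψm x).2]
            have h1 : sInf (T K) ≤ L g := csInf_le (hTbdd _) ⟨g, hg1, fun x => hg0 x, rfl⟩
            have h2 : L g ≤ f (diam U) := by
              refine le_trans (hLle g) ?_
              have hsingle : wP f η g ≤ ENNReal.ofReal (f (diam U)) := by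
                refine wP_single hdiamU (fun x => ?_) (fun x hx => ?_) hf.map_zero
                · simp only [hgdef, ContinuousMap.sub_apply, ContinuousMap.one_apply]
                  linarith [(hψm x).1]
                · have : ψ x = 1 := hψU hx
                  simp [hgdef, this]
              calc p g ≤ (ENNReal.ofReal (f (diam U))).toReal :=
                    ENNReal.toReal_mono ENNReal.ofReal_ne_top hsingle
                _ = f (diam U) := ENNReal.toReal_ofReal
                    (by simpa [hf.map_zero] using hf.mono diam_nonneg)
            rw [hcoe]
            exact ENNReal.ofReal_le_ofReal (h1.trans h2)
    obtain ⟨r, hr0, hrη⟩ := ENNReal.lt_iff_exists_add_pos_lt.1 hA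
    have hr0' : (0 : ℝ) < (r : ℝ) / 2 := by positivity
    have hev : ∀ ε ∈ Ioc (0 : ℝ) ((r : ℝ) / 2),
        C.measure A ≤ ENNReal.ofReal (f (diam A + 2 * ε)) := by
      intro ε hε
      have hth : EMetric.diam (thickening ε A) ≤ η := by
        have h1 : EMetric.diam (thickening ε A) ≤ EMetric.diam A + 2 * (ε.toNNReal : ℝ≥0∞) := by
          have : thickening ε A = thickening (ε.toNNReal : ℝ) A := by
            rw [Real.coe_toNNReal ε hε.1.le]
          rw [this]
          exact Metric.ediam_thickening_le ε.toNNReal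
        refine le_trans h1 (le_trans ?_ hrη.le)
        refine add_le_add_right ?_ _
        have h2 : (2 : ℝ≥0∞) * (ε.toNNReal : ℝ≥0∞) = ((2 * ε.toNNReal : ℝ≥0) : ℝ≥0∞) := by
          norm_cast
        rw [h2]
        refine ENNReal.coe_le_coe.2 ?_
        have : (2 * ε.toNNReal : ℝ≥0) = ((2 * ε : ℝ).toNNReal) := by
          rw [Real.toNNReal_mul (by norm_num)]
          norm_num
        rw [this]
        refine Real.toNNReal_le_iff_le_coe.2 ?_
        have := hε.2
        linarith
      refine le_trans (hbound ε hε.1 hth) (ENNReal.ofReal_le_ofReal (hf.mono ?_))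
      exact Metric.diam_thickening_le A hε.1.le
    have htend : Tendsto (fun ε : ℝ => ENNReal.ofReal (f (diam A + 2 * ε))) (nhdsWithin 0 (Ioi 0))
        (nhds (ENNReal.ofReal (f (diam A)))) := by
      have hc : Continuous fun ε : ℝ => ENNReal.ofReal (f (diam A + 2 * ε)) :=
        ENNReal.continuous_ofReal.comp (hf.continuous.comp (by continuity))
      have h0 := hc.tendsto 0
      simpa using h0.mono_left nhdsWithin_le_nhds
    exact ge_of_tendsto htend (eventually_of_mem (Ioc_mem_nhdsGT_of_mem ⟨le_refl 0, hr0'⟩) hev)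
end

section
/- Let X, g, and the balls {B_n} be as in the MTP from balls to open sets. Suppose {R_α : α ∈ J} are resonant sets in X with the κ-scaling property for some 0 ≤ κ < 1: H^g(B(x,r) ∩ Δ(R_α,η)) ≍ g(η)^{1-κ}·g(r)^κ for x ∈ R_α, 0 < η ≤ r. Let f ⪯ g be a dimension function with f/g^κ also a dimension function, let Υ_n → 0, and set Ῡ_n := g^{-1}((f(Υ_n)/g(Υ_n)^κ)^{1/(1-κ)}). Then for any ball B with center z on a resonant set R_n and radius Ῡ_n, the set E_B = 5B ∩ Δ(R_n, Υ_n) satisfies H^f_∞(E_B) ≳ H^g(B), with an implied constant independent of n and B. -/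
open Metric Set ENNReal Filter MeasureTheory

section Infra
variable {X : Type*} [MetricSpace X]

lemma hMeasAux_le (f : ℝ → ℝ) (η : ℝ) {A : Set X} (U : ℕ → Set X)
    (h1 : IsBallFamily U) (h2 : A ⊆ ⋃ i, U i) (h3 : ∀ i, diam (U i) ≤ η) :
    hMeasAux f η A ≤ ∑' i, ENNReal.ofReal (f (diam (U i))) := by
  unfold hMeasAux
  exact iInf_le_of_le U (iInf_le_of_le h1 (iInf_le_of_le h2 (iInf_le_of_le h3 le_rfl)))

lemma le_hCont (f : ℝ → ℝ) (A : Set X) (C : ℝ≥0∞)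
    (h : ∀ U : ℕ → Set X, IsBallFamily U → A ⊆ ⋃ i, U i →
      C ≤ ∑' i, ENNReal.ofReal (f (diam (U i)))) :
    C ≤ hCont f A :=
  le_iInf fun U => le_iInf fun h1 => le_iInf fun h2 => h U h1 h2

lemma hMeasAux_mono (f : ℝ → ℝ) (η : ℝ) {A B : Set X} (h : A ⊆ B) :
    hMeasAux f η A ≤ hMeasAux f η B := by
  unfold hMeasAux
  refine le_iInf fun U => le_iInf fun h1 => le_iInf fun h2 => le_iInf fun h3 => ?_
  exact hMeasAux_le f η U h1 (h.trans h2) h3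

lemma hMeas_mono (f : ℝ → ℝ) {A B : Set X} (h : A ⊆ B) : hMeas f A ≤ hMeas f B := by
  unfold hMeas
  exact iSup_mono fun η => iSup_mono fun hη => hMeasAux_mono f η h

lemma hMeasAux_le_hMeas (f : ℝ → ℝ) {η : ℝ} (hη : 0 < η) (A : Set X) :
    hMeasAux f η A ≤ hMeas f A := by
  unfold hMeas
  exact le_iSup_of_le η (le_iSup_of_le hη le_rfl)

lemma hMeasAux_iUnion_le (f : ℝ → ℝ) (η : ℝ) (A : ℕ → Set X) :
    hMeasAux f η (⋃ i, A i) ≤ ∑' i, hMeasAux f η (A i) := by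
  refine ENNReal.le_of_forall_pos_le_add fun ε hε hS => ?_
  obtain ⟨δ, hδpos, hδsum⟩ := ENNReal.exists_pos_sum_of_countable
    (ε := (ε : ℝ≥0∞)) (by exact_mod_cast hε.ne') ℕ
  have hex : ∀ i, ∃ U : ℕ → Set X, IsBallFamily U ∧ (A i ⊆ ⋃ j, U j) ∧
      (∀ j, diam (U j) ≤ η) ∧
      ∑' j, ENNReal.ofReal (f (diam (U j))) < hMeasAux f η (A i) + δ i := by
    intro i
    have h1 : hMeasAux f η (A i) ≠ ∞ := ne_top_of_le_ne_top hS.ne (ENNReal.le_tsum i)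
    have h2 : hMeasAux f η (A i) < hMeasAux f η (A i) + δ i :=
      ENNReal.lt_add_right h1 (by exact_mod_cast (hδpos i).ne')
    unfold hMeasAux at h2
    simp only [iInf_lt_iff] at h2
    obtain ⟨U, hU, hc, hm, hs⟩ := h2
    exact ⟨U, hU, hc, hm, hs⟩
  choose V hVb hVc hVm hVs using hex
  classical
  set e : ℕ ≃ ℕ × ℕ := Nat.pairEquiv.symm with he
  set W : ℕ → Set X := fun k => V (e k).1 (e k).2 with hW
  have hWb : IsBallFamily W := fun k => hVb (e k).1 (e k).2
  have hWc : (⋃ i, A i) ⊆ ⋃ k, W k := by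
    intro x hx
    obtain ⟨i, hxi⟩ := mem_iUnion.1 hx
    obtain ⟨j, hxj⟩ := mem_iUnion.1 (hVc i hxi)
    refine mem_iUnion.2 ⟨e.symm (i, j), ?_⟩
    simp [hW, Equiv.apply_symm_apply]
    exact hxj
  have hWm : ∀ k, diam (W k) ≤ η := fun k => hVm _ _
  calc hMeasAux f η (⋃ i, A i) ≤ ∑' k, ENNReal.ofReal (f (diam (W k))) :=
        hMeasAux_le f η W hWb hWc hWm
    _ = ∑' p : ℕ × ℕ, ENNReal.ofReal (f (diam (V p.1 p.2))) :=
        e.tsum_eq (fun p => ENNReal.ofReal (f (diam (V p.1 p.2))))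
    _ = ∑' i, ∑' j, ENNReal.ofReal (f (diam (V i j))) := ENNReal.tsum_prod (f := fun i j => ENNReal.ofReal (f (diam (V i j))))
    _ ≤ ∑' i, (hMeasAux f η (A i) + δ i) := ENNReal.tsum_le_tsum fun i => (hVs i).le
    _ = (∑' i, hMeasAux f η (A i)) + ∑' i, (δ i : ℝ≥0∞) := ENNReal.tsum_add
    _ ≤ (∑' i, hMeasAux f η (A i)) + ε := add_le_add_right hδsum.le _

lemma hMeas_le_tsum (g : ℝ → ℝ) (A : Set X) (U : ℕ → Set X) (h : A ⊆ ⋃ i, U i) :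
    hMeas g A ≤ ∑' i, hMeas g (A ∩ U i) := by
  unfold hMeas
  refine iSup_le fun η => iSup_le fun hη => ?_
  have h1 : A ⊆ ⋃ i, (A ∩ U i) := fun x hx => by
    obtain ⟨i, hi⟩ := mem_iUnion.1 (h hx)
    exact mem_iUnion.2 ⟨i, hx, hi⟩
  calc hMeasAux g η A ≤ hMeasAux g η (⋃ i, A ∩ U i) := hMeasAux_mono g η h1
    _ ≤ ∑' i, hMeasAux g η (A ∩ U i) := hMeasAux_iUnion_le g η _
    _ ≤ ∑' i, hMeas g (A ∩ U i) := ENNReal.tsum_le_tsum fun i => hMeasAux_le_hMeas g hη _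

end Infra

section Infra2
variable {X : Type*} [MetricSpace X]

/-- If a quantity is below `ofReal (c * g ε)` for all small `ε`, it is zero. -/
lemma eq_zero_of_le_ofReal (g : ℝ → ℝ) (hg : DimFunc g) (c : ℝ) {a : ℝ≥0∞}
    (h : ∀ ε : ℝ, 0 < ε → a ≤ ENNReal.ofReal (c * g ε)) : a = 0 := by
  have ht : Tendsto (fun k : ℕ => ENNReal.ofReal (c * g (1 / (k + 1 : ℝ)))) atTop (nhds 0) := by
    have h1 : Tendsto (fun k : ℕ => (1 / (k + 1 : ℝ))) atTop (nhds 0) :=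
      tendsto_one_div_add_atTop_nhds_zero_nat
    have h2 : Tendsto (fun k : ℕ => c * g (1 / (k + 1 : ℝ))) atTop (nhds 0) := by
      have := ((hg.continuous.tendsto 0).comp h1).const_mul c
      simpa [hg.map_zero] using this
    simpa using (ENNReal.tendsto_ofReal h2)
  have hle : a ≤ 0 := ge_of_tendsto ht (Eventually.of_forall fun k => h _ (by positivity))
  exact le_antisymm hle (zero_le)

lemma cover_lower (g f : ℝ → ℝ) (E : Set X) (M K : ℝ) (hK : 0 < K)
    (U : ℕ → Set X) (hcov : E ⊆ ⋃ i, U i)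
    (hM : ENNReal.ofReal M ≤ hMeas g E)
    (hper : ∀ i, hMeas g (E ∩ U i) ≤ ENNReal.ofReal (K * f (diam (U i)))) :
    ENNReal.ofReal (M / K) ≤ ∑' i, ENNReal.ofReal (f (diam (U i))) := by
  have h1 : ENNReal.ofReal M ≤ ENNReal.ofReal K * ∑' i, ENNReal.ofReal (f (diam (U i))) := by
    calc ENNReal.ofReal M ≤ hMeas g E := hM
      _ ≤ ∑' i, hMeas g (E ∩ U i) := hMeas_le_tsum g E U hcov
      _ ≤ ∑' i, ENNReal.ofReal (K * f (diam (U i))) := ENNReal.tsum_le_tsum hper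
      _ = ∑' i, ENNReal.ofReal K * ENNReal.ofReal (f (diam (U i))) := by
          simp [ENNReal.ofReal_mul hK.le]
      _ = ENNReal.ofReal K * ∑' i, ENNReal.ofReal (f (diam (U i))) := ENNReal.tsum_mul_left
  rw [ENNReal.ofReal_div_of_pos hK]
  rw [ENNReal.div_le_iff_le_mul (Or.inl (by simp [hK])) (Or.inl ENNReal.ofReal_ne_top)]
  rw [mul_comm]
  exact h1

/-- comparability of ratios at two scales. -/
lemma ratio_bound (f g : ℝ → ℝ) (hf : DimFunc f) (hg : DimFunc g) (hfg : DimLE f g)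
    (T : ℝ) (hT : 0 < T) :
    ∃ c₃ : ℝ, 0 < c₃ ∧ ∀ d u : ℝ, 0 < d → d ≤ u → u ≤ T →
      c₃ * (f u / g u) ≤ f d / g d := by
  obtain ⟨hmono | hanti, L, hL, hlim⟩ := hfg
  · -- monotone case
    have hkey : ∀ d : ℝ, 0 < d → L ≤ ENNReal.ofReal (f d / g d) := by
      intro d hd
      refine le_of_tendsto hlim ?_
      have h1 : ∀ᶠ r in nhdsWithin 0 (Ioi (0:ℝ)), r < d :=
        eventually_nhdsWithin_of_eventually_nhds (Filter.Tendsto.eventually_lt_const hd tendsto_id)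
      filter_upwards [h1, self_mem_nhdsWithin] with r hr hr'
      exact ENNReal.ofReal_le_ofReal (hmono hr' (lt_trans hr' hr : (0:ℝ) < d) hr.le)
    have hLfin : L ≠ ⊤ := by
      have := hkey T hT
      exact ne_top_of_le_ne_top ENNReal.ofReal_ne_top this
    have hl : 0 < L.toReal := ENNReal.toReal_pos hL.ne' hLfin
    have hfT : 0 < f T := hf.pos T hT
    have hgT : 0 < g T := hg.pos T hT
    refine ⟨L.toReal * (g T / f T), by positivity, fun d u hd hdu huT => ?_⟩
    have hdl : L.toReal ≤ f d / g d := by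
      have := hkey d hd
      rw [← ENNReal.ofReal_toReal hLfin] at this
      exact (ENNReal.ofReal_le_ofReal_iff (div_nonneg (hf.pos d hd).le (hg.pos d hd).le)).1 this
    have hu : 0 < u := lt_of_lt_of_le hd hdu
    have hru : f u / g u ≤ f T / g T := by
      rcases eq_or_lt_of_le huT with h | h
      · simp [h]
      · exact hmono hu hT huT
    calc L.toReal * (g T / f T) * (f u / g u) ≤ L.toReal * (g T / f T) * (f T / g T) := by
          apply mul_le_mul_of_nonneg_left hru; positivity
      _ = L.toReal := by field_simp
      _ ≤ f d / g d := hdl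
  · -- antitone case
    refine ⟨1, one_pos, fun d u hd hdu huT => ?_⟩
    rw [one_mul]
    rcases eq_or_lt_of_le hdu with h | h
    · simp [h]
    · exact hanti hd (lt_trans hd h) hdu

end Infra2

section RealLemmas

lemma realA (κ a b F fd G5 k₂ D c₀ em : ℝ)
    (hκ0 : 0 ≤ κ) (hκ1 : κ < 1) (ha : 0 < a) (hb : 0 < b) (hF : 0 < F) (hfd : 0 < fd)
    (hD : 1 < D) (hk₂ : 0 < k₂) (hc₀ : 0 < c₀)
    (hsbw : a ^ (1-κ) * b ^ κ * F = a * b)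
    (hG5nn : 0 ≤ G5) (hG5 : G5 ≤ D^3 * b)
    (hfUb : c₀ * b ≤ fd)
    (hem : k₂ * D^3 / c₀ ≤ em) :
    k₂ * (a ^ (1-κ) * G5 ^ κ) ≤ em * (a / F) * fd := by
  have hDpos : (0:ℝ) < D := by linarith
  have ha1κ : 0 < a ^ (1-κ) := Real.rpow_pos_of_pos ha _
  have hbκ : 0 < b ^ κ := Real.rpow_pos_of_pos hb _
  have h9 : G5 ^ κ ≤ D^3 * b ^ κ := by
    calc G5 ^ κ ≤ (D^3 * b) ^ κ := Real.rpow_le_rpow hG5nn hG5 hκ0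
      _ = (D^3) ^ κ * b ^ κ := Real.mul_rpow (by positivity) hb.le
      _ ≤ D^3 * b ^ κ := by
          apply mul_le_mul_of_nonneg_right _ hbκ.le
          calc (D^3:ℝ) ^ κ ≤ (D^3:ℝ) ^ (1:ℝ) :=
                Real.rpow_le_rpow_of_exponent_le (one_le_pow₀ hD.le) hκ1.le
            _ = D^3 := Real.rpow_one _
  have hP : a ^ (1-κ) * b ^ κ = a * b / F := (eq_div_iff hF.ne').2 hsbw
  have hble : b ≤ fd / c₀ := (le_div_iff₀ hc₀).2 (by linarith)
  calc k₂ * (a ^ (1-κ) * G5 ^ κ) ≤ k₂ * (a ^ (1-κ) * (D^3 * b ^ κ)) := by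
        apply mul_le_mul_of_nonneg_left _ hk₂.le
        exact mul_le_mul_of_nonneg_left h9 ha1κ.le
    _ = k₂ * D^3 * (a ^ (1-κ) * b ^ κ) := by ring
    _ = k₂ * D^3 * (a * b / F) := by rw [hP]
    _ ≤ k₂ * D^3 * (a * (fd / c₀) / F) := by gcongr
    _ = (k₂ * D^3 / c₀) * (a / F) * fd := by field_simp
    _ ≤ em * (a / F) * fd := by gcongr

lemma realB (κ a F fd gd G2 k₂ D em : ℝ)
    (hκ0 : 0 ≤ κ) (hκ1 : κ < 1) (ha : 0 < a) (hF : 0 < F) (hfd : 0 < fd) (hgd : 0 < gd)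
    (hD : 1 < D) (hk₂ : 0 < k₂)
    (haa : a ^ (1-κ) * a ^ κ = a)
    (hG2nn : 0 ≤ G2) (hG2 : G2 ≤ D * gd)
    (hmono : F / a ^ κ ≤ fd / gd ^ κ)
    (hem : k₂ * D ≤ em) :
    k₂ * (a ^ (1-κ) * G2 ^ κ) ≤ em * (a / F) * fd := by
  have hDpos : (0:ℝ) < D := by linarith
  have ha1κ : 0 < a ^ (1-κ) := Real.rpow_pos_of_pos ha _
  have haκ : 0 < a ^ κ := Real.rpow_pos_of_pos ha _
  have hgdκ : 0 < gd ^ κ := Real.rpow_pos_of_pos hgd _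
  have h9 : G2 ^ κ ≤ D * gd ^ κ := by
    calc G2 ^ κ ≤ (D * gd) ^ κ := Real.rpow_le_rpow hG2nn hG2 hκ0
      _ = D ^ κ * gd ^ κ := Real.mul_rpow hDpos.le hgd.le
      _ ≤ D * gd ^ κ := by
          apply mul_le_mul_of_nonneg_right _ hgdκ.le
          calc D ^ κ ≤ D ^ (1:ℝ) := Real.rpow_le_rpow_of_exponent_le hD.le hκ1.le
            _ = D := Real.rpow_one _
  have h4 : gd ^ κ ≤ fd * a ^ κ / F := by
    rw [div_le_div_iff₀ haκ hgdκ] at hmono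
    rw [le_div_iff₀ hF]
    nlinarith
  calc k₂ * (a ^ (1-κ) * G2 ^ κ) ≤ k₂ * (a ^ (1-κ) * (D * gd ^ κ)) := by
        apply mul_le_mul_of_nonneg_left _ hk₂.le
        exact mul_le_mul_of_nonneg_left h9 ha1κ.le
    _ ≤ k₂ * (a ^ (1-κ) * (D * (fd * a ^ κ / F))) := by gcongr
    _ = k₂ * D * (a ^ (1-κ) * a ^ κ) * fd / F := by ring
    _ = k₂ * D * (a / F) * fd := by rw [haa]; ring
    _ ≤ em * (a / F) * fd := by gcongr

lemma realC (a F fd gd G2 c₂ c₃ D em : ℝ)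
    (ha : 0 < a) (hF : 0 < F) (hfd : 0 < fd) (hgd : 0 < gd)
    (hD : 1 < D) (hc₂ : 0 < c₂) (hc₃ : 0 < c₃)
    (hG2 : G2 ≤ D * gd)
    (hratio : c₃ * (F / a) ≤ fd / gd)
    (hem : c₂ * D / c₃ ≤ em) :
    c₂ * G2 ≤ em * (a / F) * fd := by
  have hDpos : (0:ℝ) < D := by linarith
  have h4 : gd ≤ fd * a / (c₃ * F) := by
    have hr2 : (c₃ * F) / a ≤ fd / gd := by rw [mul_div_assoc]; exact hratio
    rw [div_le_div_iff₀ ha hgd] at hr2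
    rw [le_div_iff₀ (by positivity)]
    nlinarith
  calc c₂ * G2 ≤ c₂ * (D * gd) := by nlinarith
    _ ≤ c₂ * (D * (fd * a / (c₃ * F))) := by gcongr
    _ = (c₂ * D / c₃) * (a / F) * fd := by field_simp
    _ ≤ em * (a / F) * fd := by gcongr

lemma realCrude (G2 gd fd c₂ c₀ D : ℝ)
    (hc₂ : 0 < c₂) (hc₀ : 0 < c₀) (hD : 1 < D) (hfd : 0 < fd)
    (hG2 : G2 ≤ D * gd) (hflow : c₀ * gd ≤ fd) :
    c₂ * G2 ≤ (c₂ * D / c₀) * fd := by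
  have hDpos : (0:ℝ) < D := by linarith
  have h1 : gd ≤ fd / c₀ := (le_div_iff₀ hc₀).2 (by linarith)
  calc c₂ * G2 ≤ c₂ * (D * gd) := by nlinarith
    _ ≤ c₂ * (D * (fd / c₀)) := by gcongr
    _ = (c₂ * D / c₀) * fd := by field_simp

end RealLemmas


set_option maxHeartbeats 3000000 in
/-- under the `κ`-scaling property for the resonant sets `R n`, with
`f ⪯ g`, `f/g^κ` a dimension function, and `Ub n = g⁻¹((f(Υ n)/g(Υ n)^κ)^{1/(1-κ)})`,
every set `E_B = 5B ∩ Δ(R n, Υ n)` (with `B` a ball of radius `Ub n` centred on `R n`)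
satisfies `H^f_∞(E_B) ≳ H^g(B)` with a constant independent of `n` and `B`. -/
theorem stmt18 {X : Type*} [MetricSpace X] [CompactSpace X]
    (g f : ℝ → ℝ) (D κ : ℝ) (hg : DimFunc g) (hD : 1 < D) (hgD : DoublingWith g D)
    (hAh : Ahlfors g X) (hκ0 : 0 ≤ κ) (hκ1 : κ < 1)
    (R : ℕ → Set X)
    (hscale : ∃ k₁ k₂ : ℝ, 0 < k₁ ∧ 0 < k₂ ∧ ∀ (n : ℕ) (x : X) (η rad : ℝ),
      x ∈ R n → 0 < η → η ≤ rad → rad < diam (univ : Set X) →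
      ENNReal.ofReal (k₁ * (g η ^ (1 - κ) * g rad ^ κ)) ≤
          hMeas g (ball x rad ∩ Metric.thickening η (R n)) ∧
        hMeas g (ball x rad ∩ Metric.thickening η (R n)) ≤
          ENNReal.ofReal (k₂ * (g η ^ (1 - κ) * g rad ^ κ)))
    (hf : DimFunc f) (hfg : DimLE f g)
    (hfgκ : DimFunc (fun r => f r / g r ^ κ))
    (Υ Ub : ℕ → ℝ) (hΥpos : ∀ n, 0 < Υ n) (hΥ0 : Tendsto Υ atTop (nhds 0))
    (hUbpos : ∀ n, 0 < Ub n)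
    (hUb : ∀ n, g (Ub n) = (f (Υ n) / g (Υ n) ^ κ) ^ ((1:ℝ) / (1 - κ))) :
    ∃ Cc : ℝ, 0 < Cc ∧ ∀ (n : ℕ) (z : X), z ∈ R n →
      ENNReal.ofReal Cc * hMeas g (ball z (Ub n)) ≤
        hCont f (ball z (5 * Ub n) ∩ Metric.thickening (Υ n) (R n)) := by
  obtain ⟨c₁, c₂, hc₁, hc₂, hAhW⟩ := hAh
  obtain ⟨k₁, k₂, hk₁, hk₂, hsc⟩ := hscale
  by_cases hX : Nonempty X
  swap
  · exact ⟨1, one_pos, fun n z hz => absurd ⟨z⟩ hX⟩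
  obtain ⟨x₀⟩ := hX
  have hTb : Bornology.IsBounded (univ : Set X) := isCompact_univ.isBounded
  have h1κ : (0:ℝ) < 1 - κ := by linarith
  by_cases hT : 0 < diam (univ : Set X)
  swap
  · exfalso
    have hsub : ∀ ε : ℝ, 0 < ε → ball x₀ 1 ⊆ ball x₀ ε := by
      intro ε hε y hy
      have h1 : dist y x₀ ≤ diam (univ : Set X) :=
        dist_le_diam_of_mem hTb (mem_univ _) (mem_univ _)
      have h2 : dist y x₀ ≤ 0 := h1.trans (not_lt.1 hT)
      exact mem_ball.2 (lt_of_le_of_lt h2 hε)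
    have h0 : hMeas g (ball x₀ 1) = 0 :=
      eq_zero_of_le_ofReal g hg c₂ fun ε hε =>
        (hMeas_mono g (hsub ε hε)).trans (hAhW x₀ ε hε).2
    have h1 := (hAhW x₀ 1 one_pos).1
    rw [h0] at h1
    have h2 := nonpos_iff_eq_zero.mp h1
    rw [ENNReal.ofReal_eq_zero] at h2
    nlinarith [hg.pos 1 one_pos]
  set T := diam (univ : Set X) with hTdef
  -- global constants
  obtain ⟨c₃, hc₃, hratio⟩ := ratio_bound f g hf hg hfg T hT
  have hfT : 0 < f T := hf.pos T hT
  have hgT : 0 < g T := hg.pos T hT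
  set c₀ : ℝ := c₃ * (f T / g T) with hc₀def
  have hc₀ : 0 < c₀ := by positivity
  have hflow : ∀ d, 0 < d → d ≤ T → c₀ * g d ≤ f d := by
    intro d hd hdT
    have h1 := hratio d T hd hdT le_rfl
    have hgd : 0 < g d := hg.pos d hd
    calc c₀ * g d ≤ (f d / g d) * g d := mul_le_mul_of_nonneg_right h1 hgd.le
      _ = f d := div_mul_cancel₀ _ hgd.ne'
  -- the empty set has zero measure
  have hempty : hMeas g (∅ : Set X) = 0 :=
    eq_zero_of_le_ofReal g hg c₂ fun ε hε =>
      (hMeas_mono g (empty_subset _)).trans (hAhW x₀ ε hε).2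
  -- degenerate (zero-diameter) sets have zero measure
  have hdeg : ∀ (S U : Set X), Bornology.IsBounded U → S ⊆ U → diam U = 0 → hMeas g S = 0 := by
    intro S U hUbd hSU hdiam
    rcases S.eq_empty_or_nonempty with h | hne
    · rw [h]; exact hempty
    obtain ⟨y, hy⟩ := hne
    refine eq_zero_of_le_ofReal g hg c₂ fun ε hε => ?_
    refine (hMeas_mono g ?_).trans (hAhW y ε hε).2
    intro u hu
    have h1 : dist u y ≤ diam U := dist_le_diam_of_mem hUbd (hSU hu) (hSU hy)
    rw [hdiam] at h1
    exact mem_ball.2 (lt_of_le_of_lt h1 hε)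
  -- Ub is eventually small
  have hgUb0 : Tendsto (fun n => g (Ub n)) atTop (nhds 0) := by
    have hφ : Tendsto (fun n => f (Υ n) / g (Υ n) ^ κ) atTop (nhds 0) := by
      have h1 := (hfgκ.continuous.tendsto 0).comp hΥ0
      simpa [hfgκ.map_zero, Function.comp_def] using h1
    have hp : (0:ℝ) < 1 / (1 - κ) := by positivity
    have hcont : ContinuousAt (fun x : ℝ => x ^ ((1:ℝ)/(1-κ))) 0 :=
      Real.continuousAt_rpow_const 0 _ (Or.inr hp.le)
    have h2 := hcont.tendsto.comp hφ
    rw [Real.zero_rpow hp.ne'] at h2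
    have h3 : (fun n => g (Ub n)) =
        (fun x : ℝ => x ^ ((1:ℝ)/(1-κ))) ∘ (fun n => f (Υ n) / g (Υ n) ^ κ) := by
      funext n; exact hUb n
    rw [h3]
    exact h2
  obtain ⟨N, hN⟩ : ∃ N, ∀ n ≥ N, 5 * Ub n < T := by
    have hev : ∀ᶠ n in atTop, g (Ub n) < g (T/5) :=
      (tendsto_order.1 hgUb0).2 _ (hg.pos _ (by linarith))
    obtain ⟨N, hN⟩ := eventually_atTop.1 hev
    refine ⟨N, fun n hn => ?_⟩
    by_contra hcon
    push_neg at hcon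
    exact absurd (hN n hn) (not_lt.2 (hg.mono (by linarith)))
  -- constants
  set em : ℝ := max (k₂ * D^3 / c₀) (max (k₂ * D) (c₂ * D / c₃)) with hemdef
  have hDpos : (0:ℝ) < D := by linarith
  have hem : 0 < em := lt_of_lt_of_le (by positivity) (le_max_left _ _)
  have hemA : k₂ * D^3 / c₀ ≤ em := le_max_left _ _
  have hemB : k₂ * D ≤ em := (le_max_left _ _).trans (le_max_right _ _)
  have hemC : c₂ * D / c₃ ≤ em := (le_max_right _ _).trans (le_max_right _ _)
  set Ccn : ℕ → ℝ := fun m =>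
    (c₁ * g (min (5 * Ub m) (Υ m)) * c₀ / (c₂ * D)) / (c₂ * g (Ub m)) with hCcndef
  have hCcnpos : ∀ m, 0 < Ccn m := by
    intro m
    have h1 : 0 < min (5 * Ub m) (Υ m) := lt_min (by linarith [hUbpos m]) (hΥpos m)
    have h2 := hg.pos _ h1
    have h3 := hg.pos _ (hUbpos m)
    rw [hCcndef]
    positivity
  obtain ⟨CB, hCB0, hCBle⟩ : ∃ CB : ℝ, 0 < CB ∧ ∀ n < N, CB ≤ Ccn n := by
    rcases Nat.eq_zero_or_pos N with h | h
    · exact ⟨1, one_pos, fun n hn => absurd (h ▸ hn) (Nat.not_lt_zero n)⟩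
    · have hne : (Finset.range N).Nonempty := ⟨0, Finset.mem_range.2 h⟩
      refine ⟨(Finset.range N).inf' hne Ccn, ?_,
        fun n hn => Finset.inf'_le _ (Finset.mem_range.2 hn)⟩
      rw [Finset.lt_inf'_iff]
      exact fun n _ => hCcnpos n
  set Cc : ℝ := min (k₁ / (em * c₂)) (min ((c₀ * c₁ / (c₂ * D)) / c₂) CB) with hCcdef
  have hCc : 0 < Cc := by
    apply lt_min (by positivity)
    exact lt_min (by positivity) hCB0
  refine ⟨Cc, hCc, fun n z hz => ?_⟩
  have hΥn := hΥpos n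
  have hUbn := hUbpos n
  have ha : 0 < g (Υ n) := hg.pos _ hΥn
  have hb : 0 < g (Ub n) := hg.pos _ hUbn
  have hF : 0 < f (Υ n) := hf.pos _ hΥn
  set E : Set X := ball z (5 * Ub n) ∩ Metric.thickening (Υ n) (R n) with hEdef
  have hballU : hMeas g (ball z (Ub n)) ≤ ENNReal.ofReal (c₂ * g (Ub n)) :=
    (hAhW z (Ub n) hUbn).2
  -- generic reduction
  have main : ∀ (E' : Set X) (M K : ℝ), 0 < K → E' ⊆ E →
      ENNReal.ofReal M ≤ hMeas g E' →
      (∀ (U : ℕ → Set X), IsBallFamily U → E ⊆ ⋃ i, U i →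
        ∀ i, hMeas g (E' ∩ U i) ≤ ENNReal.ofReal (K * f (diam (U i)))) →
      Cc * (c₂ * g (Ub n)) ≤ M / K →
      ENNReal.ofReal Cc * hMeas g (ball z (Ub n)) ≤ hCont f E := by
    intro E' M K hKpos hsub hM hper hreal
    calc ENNReal.ofReal Cc * hMeas g (ball z (Ub n))
        ≤ ENNReal.ofReal Cc * ENNReal.ofReal (c₂ * g (Ub n)) := mul_le_mul_right hballU _
      _ = ENNReal.ofReal (Cc * (c₂ * g (Ub n))) := (ENNReal.ofReal_mul hCc.le).symm
      _ ≤ ENNReal.ofReal (M / K) := ENNReal.ofReal_le_ofReal hreal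
      _ ≤ hCont f E := le_hCont f E _ fun U hU hUcov =>
          cover_lower g f E' M K hKpos U (hsub.trans hUcov) hM (hper U hU hUcov)
  by_cases hΥUb : Υ n < Ub n
  · by_cases hsm : 5 * Ub n < T
    · -- HARD CASE
      have hUbT : Ub n < T := by linarith
      have haκ : 0 < g (Υ n) ^ κ := Real.rpow_pos_of_pos ha κ
      have hbkey : g (Ub n) ^ (1 - κ) = f (Υ n) / g (Υ n) ^ κ := by
        rw [hUb n, ← Real.rpow_mul (by positivity), one_div_mul_cancel h1κ.ne',
          Real.rpow_one]
      have haa : g (Υ n) ^ (1 - κ) * g (Υ n) ^ κ = g (Υ n) := by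
        rw [← Real.rpow_add ha]; norm_num
      have hbb : g (Ub n) ^ κ * g (Ub n) ^ (1 - κ) = g (Ub n) := by
        rw [← Real.rpow_add hb]; norm_num
      have hbF : g (Ub n) ^ κ * f (Υ n) = g (Ub n) * g (Υ n) ^ κ := by
        rw [hbkey] at hbb
        field_simp at hbb
        linarith
      have hsbw : g (Υ n) ^ (1-κ) * g (Ub n) ^ κ * f (Υ n) = g (Υ n) * g (Ub n) := by
        linear_combination g (Υ n) ^ (1-κ) * hbF + g (Ub n) * haa
      have hKfull : 0 < em * (g (Υ n) / f (Υ n)) := by positivity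
      refine main (ball z (Ub n) ∩ Metric.thickening (Υ n) (R n))
        (k₁ * (g (Υ n) ^ (1-κ) * g (Ub n) ^ κ)) (em * (g (Υ n) / f (Υ n))) hKfull
        (inter_subset_inter_left _ (ball_subset_ball (by linarith))) ?_ ?_ ?_
      · exact (hsc n z (Υ n) (Ub n) hz hΥn hΥUb.le hUbT).1
      · -- per-ball bounds
        intro U hUfam hUcov i
        obtain ⟨xc, rc, hUi⟩ := hUfam i
        have hUbd : Bornology.IsBounded (U i) := by rw [hUi]; exact isBounded_ball
        set E' := ball z (Ub n) ∩ Metric.thickening (Υ n) (R n) with hE'def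
        rcases (E' ∩ U i).eq_empty_or_nonempty with hcE | hne
        · rw [hcE, hempty]; exact zero_le
        obtain ⟨y, hyE, hyU⟩ := hne
        rcases eq_or_lt_of_le (diam_nonneg (s := U i)) with hd0 | hd0
        · rw [hdeg _ _ hUbd inter_subset_right hd0.symm]; exact zero_le
        set d := diam (U i) with hddef
        have hdT : d ≤ T := diam_mono (subset_univ _) hTb
        have hfd : 0 < f d := hf.pos d hd0
        have hgd : 0 < g d := hg.pos d hd0
        have hUball2d : U i ⊆ ball y (2*d) := fun u hu =>
          mem_ball.2 (lt_of_le_of_lt (dist_le_diam_of_mem hUbd hu hyU) (by linarith))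
        rcases lt_or_ge d (Υ n) with hcC | hge
        · -- Case C : d < Υ n
          have h1 : hMeas g (E' ∩ U i) ≤ ENNReal.ofReal (c₂ * g (2*d)) :=
            (hMeas_mono g (inter_subset_right.trans hUball2d)).trans
              ((hAhW y (2*d) (by linarith)).2)
          refine h1.trans (ENNReal.ofReal_le_ofReal ?_)
          exact realC (g (Υ n)) (f (Υ n)) (f d) (g d) (g (2*d)) c₂ c₃ D em
            ha hF hfd hgd hD hc₂ hc₃ (hgD d hd0).le
            (hratio d (Υ n) hd0 hcC.le (by linarith)) hemC
        rcases lt_or_ge d (Ub n) with hcB | hcA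
        · -- Case B : Υ n ≤ d < Ub n
          obtain ⟨w', hw'R, hyw'⟩ := Metric.mem_thickening_iff.1 hyE.2
          have hsubB : E' ∩ U i ⊆ ball w' (2*d) ∩ Metric.thickening (Υ n) (R n) := by
            intro u hu
            refine ⟨mem_ball.2 ?_, hu.1.2⟩
            calc dist u w' ≤ dist u y + dist y w' := dist_triangle u y w'
              _ < d + Υ n := by
                  have := dist_le_diam_of_mem hUbd hu.2 hyU
                  linarith
              _ ≤ 2*d := by linarith
          have h1 : hMeas g (E' ∩ U i) ≤
              ENNReal.ofReal (k₂ * (g (Υ n) ^ (1-κ) * g (2*d) ^ κ)) :=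
            (hMeas_mono g hsubB).trans
              (hsc n w' (Υ n) (2*d) hw'R hΥn (by linarith) (by linarith)).2
          refine h1.trans (ENNReal.ofReal_le_ofReal ?_)
          exact realB κ (g (Υ n)) (f (Υ n)) (f d) (g d) (g (2*d)) k₂ D em
            hκ0 hκ1 ha hF hfd hgd hD hk₂ haa (hg.pos _ (by linarith)).le (hgD d hd0).le
            (hfgκ.mono hge) hemB
        · -- Case A : d ≥ Ub n
          have h1 : hMeas g (E' ∩ U i) ≤
              ENNReal.ofReal (k₂ * (g (Υ n) ^ (1-κ) * g (5 * Ub n) ^ κ)) := by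
            refine (hMeas_mono g ?_).trans
              (hsc n z (Υ n) (5 * Ub n) hz hΥn (by linarith) hsm).2
            exact inter_subset_left.trans
              (inter_subset_inter_left _ (ball_subset_ball (by linarith)))
          refine h1.trans (ENNReal.ofReal_le_ofReal ?_)
          have hg5 : g (5 * Ub n) ≤ D^3 * g (Ub n) := by
            have e1 : g (2 * Ub n) < D * g (Ub n) := hgD _ hUbn
            have e2 : g (2 * (2 * Ub n)) < D * g (2 * Ub n) := hgD _ (by linarith)
            have e3 : g (2 * (2 * (2 * Ub n))) < D * g (2 * (2 * Ub n)) := hgD _ (by linarith)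
            have e4 : g (5 * Ub n) ≤ g (2*(2*(2*Ub n))) := hg.mono (by linarith)
            nlinarith [mul_lt_mul_of_pos_left e2 hDpos,
              mul_lt_mul_of_pos_left e1 (mul_pos hDpos hDpos)]
          have hfUb : c₀ * g (Ub n) ≤ f d :=
            (hflow (Ub n) hUbn (by linarith)).trans (hf.mono hcA)
          exact realA κ (g (Υ n)) (g (Ub n)) (f (Υ n)) (f d) (g (5 * Ub n)) k₂ D c₀ em
            hκ0 hκ1 ha hb hF hfd hD hk₂ hc₀ hsbw (hg.pos _ (by linarith)).le hg5 hfUb hemA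
      · -- the real inequality
        have hMK : (k₁ * (g (Υ n) ^ (1-κ) * g (Ub n) ^ κ)) / (em * (g (Υ n) / f (Υ n)))
            = k₁ * g (Ub n) / em := by
          rw [show g (Υ n) ^ (1-κ) * g (Ub n) ^ κ = g (Υ n) * g (Ub n) / f (Υ n) from
            (eq_div_iff hF.ne').2 hsbw]
          field_simp
        rw [hMK]
        have h1 : Cc ≤ k₁ / (em * c₂) := min_le_left _ _
        have h2 := mul_le_mul_of_nonneg_right h1 (mul_pos hc₂ hb).le
        calc Cc * (c₂ * g (Ub n)) ≤ (k₁ / (em * c₂)) * (c₂ * g (Ub n)) := h2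
          _ = k₁ * g (Ub n) / em := by field_simp
    · -- not small : n < N, crude bound
      have hnN : n < N := by
        by_contra h
        push_neg at h
        exact hsm (hN n h)
      have hρ : 0 < min (5 * Ub n) (Υ n) := lt_min (by linarith) hΥn
      refine main (ball z (min (5 * Ub n) (Υ n))) (c₁ * g (min (5 * Ub n) (Υ n)))
        (c₂ * D / c₀) (by positivity) ?_ ?_ ?_ ?_
      · intro u hu
        exact ⟨ball_subset_ball (min_le_left _ _) hu,
          Metric.mem_thickening_iff.2 ⟨z, hz,
            lt_of_lt_of_le (mem_ball.1 hu) (min_le_right _ _)⟩⟩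
      · exact (hAhW z _ hρ).1
      · intro U hUfam hUcov i
        obtain ⟨xc, rc, hUi⟩ := hUfam i
        have hUbd : Bornology.IsBounded (U i) := by rw [hUi]; exact isBounded_ball
        rcases (ball z (min (5 * Ub n) (Υ n)) ∩ U i).eq_empty_or_nonempty with hcE | hne
        · rw [hcE, hempty]; exact zero_le
        obtain ⟨y, hyB, hyU⟩ := hne
        rcases eq_or_lt_of_le (diam_nonneg (s := U i)) with hd0 | hd0
        · rw [hdeg _ _ hUbd inter_subset_right hd0.symm]; exact zero_le
        set d := diam (U i) with hddef
        have hdT : d ≤ T := diam_mono (subset_univ _) hTb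
        have h1 : hMeas g (ball z (min (5 * Ub n) (Υ n)) ∩ U i) ≤
            ENNReal.ofReal (c₂ * g (2*d)) := by
          refine (hMeas_mono g ?_).trans (hAhW y (2*d) (by linarith)).2
          intro u hu
          exact mem_ball.2 (lt_of_le_of_lt (dist_le_diam_of_mem hUbd hu.2 hyU) (by linarith))
        refine h1.trans (ENNReal.ofReal_le_ofReal ?_)
        exact realCrude (g (2*d)) (g d) (f d) c₂ c₀ D hc₂ hc₀ hD (hf.pos d hd0)
          (hgD d hd0).le (hflow d hd0 hdT)
      · have h1 : Cc ≤ Ccn n := ((min_le_right _ _).trans (min_le_right _ _)).trans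
          (hCBle n hnN)
        have h2 := mul_le_mul_of_nonneg_right h1 (mul_pos hc₂ hb).le
        calc Cc * (c₂ * g (Ub n)) ≤ Ccn n * (c₂ * g (Ub n)) := h2
          _ = c₁ * g (min (5 * Ub n) (Υ n)) / (c₂ * D / c₀) := by
              rw [hCcndef]
              field_simp
  · -- Υ n ≥ Ub n : crude bound with uniform constant
    push_neg at hΥUb
    have hρ : 0 < min (5 * Ub n) (Υ n) := lt_min (by linarith) hΥn
    have hρUb : Ub n ≤ min (5 * Ub n) (Υ n) := le_min (by linarith) hΥUb
    refine main (ball z (min (5 * Ub n) (Υ n))) (c₁ * g (min (5 * Ub n) (Υ n)))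
      (c₂ * D / c₀) (by positivity) ?_ ?_ ?_ ?_
    · intro u hu
      exact ⟨ball_subset_ball (min_le_left _ _) hu,
        Metric.mem_thickening_iff.2 ⟨z, hz,
          lt_of_lt_of_le (mem_ball.1 hu) (min_le_right _ _)⟩⟩
    · exact (hAhW z _ hρ).1
    · intro U hUfam hUcov i
      obtain ⟨xc, rc, hUi⟩ := hUfam i
      have hUbd : Bornology.IsBounded (U i) := by rw [hUi]; exact isBounded_ball
      rcases (ball z (min (5 * Ub n) (Υ n)) ∩ U i).eq_empty_or_nonempty with hcE | hne
      · rw [hcE, hempty]; exact zero_le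
      obtain ⟨y, hyB, hyU⟩ := hne
      rcases eq_or_lt_of_le (diam_nonneg (s := U i)) with hd0 | hd0
      · rw [hdeg _ _ hUbd inter_subset_right hd0.symm]; exact zero_le
      set d := diam (U i) with hddef
      have hdT : d ≤ T := diam_mono (subset_univ _) hTb
      have h1 : hMeas g (ball z (min (5 * Ub n) (Υ n)) ∩ U i) ≤
          ENNReal.ofReal (c₂ * g (2*d)) := by
        refine (hMeas_mono g ?_).trans (hAhW y (2*d) (by linarith)).2
        intro u hu
        exact mem_ball.2 (lt_of_le_of_lt (dist_le_diam_of_mem hUbd hu.2 hyU) (by linarith))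
      refine h1.trans (ENNReal.ofReal_le_ofReal ?_)
      exact realCrude (g (2*d)) (g d) (f d) c₂ c₀ D hc₂ hc₀ hD (hf.pos d hd0)
        (hgD d hd0).le (hflow d hd0 hdT)
    · have h1 : Cc ≤ (c₀ * c₁ / (c₂ * D)) / c₂ := (min_le_right _ _).trans (min_le_left _ _)
      have h2 := mul_le_mul_of_nonneg_right h1 (mul_pos hc₂ hb).le
      have h3 : g (Ub n) ≤ g (min (5 * Ub n) (Υ n)) := hg.mono hρUb
      calc Cc * (c₂ * g (Ub n)) ≤ ((c₀ * c₁ / (c₂ * D)) / c₂) * (c₂ * g (Ub n)) := h2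
        _ = (c₀ * c₁ / (c₂ * D)) * g (Ub n) := by field_simp
        _ ≤ (c₀ * c₁ / (c₂ * D)) * g (min (5 * Ub n) (Υ n)) := by gcongr
        _ = c₁ * g (min (5 * Ub n) (Υ n)) / (c₂ * D / c₀) := by field_simp
end
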